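/- arXiv:2310.15754 — 3 statements merged into one kernel-verified Lean document; each statement's English description precedes it below -/
import Mathlib

section
/- Let G be a graph, σ a linear layout of G with mw(σ,G) = k, and m ≥ 1 an integer. Then the MIM-width of the m-th power Gᵐ under the same layout σ satisfies mw(σ, Gᵐ) ≤ 2k. -/
open scoped Classical

noncomputable section

namespace LMW

variable {V : Type*} [Fintype V]

/-- The bipartite graph `G[Vᵢ, V̄ᵢ]` consisting of the edges of `G` crossing the cut at
position `i` of the linear layout `σ` (here `Vᵢ` is the set of the first `i` vertices
in the layout). -/
def cutGraph (G : SimpleGraph V) (σ : V ≃ Fin (Fintype.card V)) (i : ℕ) : SimpleGraph V where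
  Adj u v := G.Adj u v ∧
    (((σ u : ℕ) < i ∧ i ≤ (σ v : ℕ)) ∨ ((σ v : ℕ) < i ∧ i ≤ (σ u : ℕ)))
  symm := by
    constructor
    intro u v h
    exact ⟨h.1.symm, h.2.symm⟩
  loopless := by
    constructor
    intro u h
    exact G.loopless.irrefl u h.1

/-- `M` is an induced matching in `H`: a set of edges of `H` such that any two distinct
edges of `M` share no endpoint and no endpoint of one is adjacent in `H` to an endpoint
of the other. -/
def IsInducedMatching (H : SimpleGraph V) (M : Finset (Sym2 V)) : Prop :=
  (↑M : Set (Sym2 V)) ⊆ H.edgeSet ∧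
    ∀ e ∈ M, ∀ f ∈ M, e ≠ f → ∀ u ∈ e, ∀ v ∈ f, u ≠ v ∧ ¬ H.Adj u v

/-- `mim H` is the size of a maximum induced matching of `H`. -/
def mim (H : SimpleGraph V) : ℕ :=
  sSup {n : ℕ | ∃ M : Finset (Sym2 V), IsInducedMatching H M ∧ M.card = n}

/-- The MIM-width of `G` under the linear layout `σ`: the maximum over all cuts
`1 ≤ i < |V|` of the size of a maximum induced matching of the cut graph. -/
def mw (G : SimpleGraph V) (σ : V ≃ Fin (Fintype.card V)) : ℕ :=
  (Finset.Ico 1 (Fintype.card V)).sup fun i => mim (cutGraph G σ i)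

/-- The linear MIM-width of `G`: the minimum of `mw G σ` over all linear layouts `σ`. -/
def lmw (G : SimpleGraph V) : ℕ :=
  sInf {m : ℕ | ∃ σ : V ≃ Fin (Fintype.card V), mw G σ = m}

/-- The `m`-th power of a graph: two distinct vertices are adjacent iff their distance
in `G` is at most `m`. -/
def graphPow (G : SimpleGraph V) (m : ℕ) : SimpleGraph V where
  Adj u v := u ≠ v ∧ G.edist u v ≤ m
  symm := by
    constructor
    intro u v h
    refine ⟨h.1.symm, ?_⟩
    rw [SimpleGraph.edist_comm]
    exact h.2
  loopless := by
    constructor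
    intro u h
    exact h.1 rfl

lemma exists_switch (f : ℕ → Prop) : ∀ n : ℕ, f 0 → ¬ f n → ∃ t, t < n ∧ f t ∧ ¬ f (t + 1) := by
  intro n
  induction n with
  | zero => intro h0 h; exact absurd h0 h
  | succ n ih =>
    intro h0 h
    by_cases hn : f n
    · exact ⟨n, Nat.lt_succ_self n, hn, h⟩
    · obtain ⟨t, ht, h1, h2⟩ := ih h0 hn
      exact ⟨t, ht.trans (Nat.lt_succ_self n), h1, h2⟩

omit [Fintype V] in
lemma edist_getVert_le {G : SimpleGraph V} {a b : V} (p : G.Walk a b) :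
    ∀ s t : ℕ, s ≤ t → t ≤ p.length →
      G.edist (p.getVert s) (p.getVert t) ≤ ((t - s : ℕ) : ℕ∞) := by
  intro s t
  induction t with
  | zero =>
    intro hst _
    interval_cases s
    simp
  | succ t ih =>
    intro hst htl
    rcases Nat.eq_or_lt_of_le hst with h | h
    · subst h; simp
    · have hs : s ≤ t := Nat.lt_succ_iff.mp h
      have h1 := ih hs (le_of_lt (Nat.lt_of_succ_le htl))
      have hadj : G.Adj (p.getVert t) (p.getVert (t + 1)) :=
        p.adj_getVert_succ (Nat.lt_of_succ_le htl)
      have hone : G.edist (p.getVert t) (p.getVert (t + 1)) ≤ 1 :=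
        le_of_eq (SimpleGraph.edist_eq_one_iff_adj.mpr hadj)
      have hsub : (t - s) + 1 = t + 1 - s := by omega
      calc G.edist (p.getVert s) (p.getVert (t + 1))
          ≤ G.edist (p.getVert s) (p.getVert t) + G.edist (p.getVert t) (p.getVert (t + 1)) :=
            SimpleGraph.edist_triangle
        _ ≤ ((t - s : ℕ) : ℕ∞) + 1 := add_le_add h1 hone
        _ = ((t + 1 - s : ℕ) : ℕ∞) := by rw [← hsub]; push_cast; ring

lemma key (G : SimpleGraph V) (σ : V ≃ Fin (Fintype.card V)) (i m : ℕ)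
    (M : Finset (Sym2 V)) (hM : IsInducedMatching (cutGraph (graphPow G m) σ i) M) :
    M.card ≤ 2 * mim (cutGraph G σ i) := by
  rcases isEmpty_or_nonempty V with hV | hV
  · have : M = ∅ := by
      apply Finset.eq_empty_of_forall_notMem
      intro e
      induction e using Sym2.ind with
      | _ x y => exact (hV.false x).elim
    simp [this]
  inhabit V
  -- For every e ∈ M, extract endpoints a,b, a crossing edge (u,v), and counters t, L.
  have hEx : ∀ e : Sym2 V, ∃ (a b u v : V) (t L : ℕ), e ∈ M →
      (e = s(a, b) ∧ (σ a : ℕ) < i ∧ i ≤ (σ b : ℕ) ∧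
        G.Adj u v ∧ (σ u : ℕ) < i ∧ i ≤ (σ v : ℕ) ∧
        t + 1 ≤ L ∧ L ≤ m ∧
        G.edist a u ≤ (t : ℕ∞) ∧ G.edist a v ≤ ((t + 1 : ℕ) : ℕ∞) ∧
        G.edist u b ≤ ((L - t : ℕ) : ℕ∞) ∧ G.edist v b ≤ ((L - t - 1 : ℕ) : ℕ∞)) := by
    intro e
    by_cases he : e ∈ M
    swap
    · exact ⟨default, default, default, default, 0, 0, fun h => absurd h he⟩
    have aux : ∀ a b : V, G.edist a b ≤ (m : ℕ∞) → (σ a : ℕ) < i → i ≤ (σ b : ℕ) →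
        ∃ (u v : V) (t L : ℕ),
          (G.Adj u v ∧ (σ u : ℕ) < i ∧ i ≤ (σ v : ℕ) ∧
            t + 1 ≤ L ∧ L ≤ m ∧
            G.edist a u ≤ (t : ℕ∞) ∧ G.edist a v ≤ ((t + 1 : ℕ) : ℕ∞) ∧
            G.edist u b ≤ ((L - t : ℕ) : ℕ∞) ∧ G.edist v b ≤ ((L - t - 1 : ℕ) : ℕ∞)) := by
      intro a b hd ha hb
      have hne : G.edist a b ≠ ⊤ := by
        intro h
        rw [h] at hd
        exact (ENat.coe_lt_top m).not_ge (le_of_eq rfl |>.trans hd) |>.elim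
      obtain ⟨p, hp⟩ := SimpleGraph.exists_walk_of_edist_ne_top hne
      have hpm : p.length ≤ m := by
        have : (p.length : ℕ∞) ≤ (m : ℕ∞) := by rw [hp]; exact hd
        exact_mod_cast this
      obtain ⟨t, htl, hft, hft1⟩ := exists_switch (fun t => (σ (p.getVert t) : ℕ) < i) p.length
        (by show (σ (p.getVert 0) : ℕ) < i; rw [p.getVert_zero]; exact ha)
        (by show ¬ (σ (p.getVert p.length) : ℕ) < i; rw [p.getVert_length]; omega)
      refine ⟨p.getVert t, p.getVert (t + 1), t, p.length,
        p.adj_getVert_succ htl, hft, by omega, by omega, hpm, ?_, ?_, ?_, ?_⟩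
      · have := edist_getVert_le p 0 t (Nat.zero_le t) (le_of_lt htl)
        rw [p.getVert_zero] at this
        simpa using this
      · have := edist_getVert_le p 0 (t + 1) (Nat.zero_le _) htl
        rw [p.getVert_zero] at this
        simpa using this
      · have := edist_getVert_le p t p.length (le_of_lt htl) le_rfl
        rw [p.getVert_length] at this
        exact this
      · have := edist_getVert_le p (t + 1) p.length htl le_rfl
        rw [p.getVert_length] at this
        have hsub : p.length - (t + 1) = p.length - t - 1 := by omega
        rwa [hsub] at this
    have hedge := hM.1 (Finset.mem_coe.mpr he)
    induction e using Sym2.ind with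
    | _ x y =>
      rw [SimpleGraph.mem_edgeSet] at hedge
      obtain ⟨⟨hxy, hdist⟩, hcross⟩ := hedge
      rcases hcross with ⟨h1, h2⟩ | ⟨h1, h2⟩
      · obtain ⟨u, v, t, L, hrest⟩ := aux x y hdist h1 h2
        exact ⟨x, y, u, v, t, L, fun _ => ⟨rfl, h1, h2, hrest⟩⟩
      · have hdist' : G.edist y x ≤ (m : ℕ∞) := by rwa [SimpleGraph.edist_comm]
        obtain ⟨u, v, t, L, hrest⟩ := aux y x hdist' h1 h2
        exact ⟨y, x, u, v, t, L, fun _ => ⟨Sym2.eq_swap, h1, h2, hrest⟩⟩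
  choose A B U W T L hQ using hEx
  -- conflict lemma
  have conflict : ∀ e ∈ M, ∀ f ∈ M, e ≠ f → G.edist (U e) (W f) ≤ 1 → T e = T f + 1 := by
    intro e he f hf hef hconf
    obtain ⟨hea, hea1, heb1, -, -, -, het, heL, heau, -, heub, -⟩ := hQ e he
    obtain ⟨hfa, hfa1, hfb1, -, -, -, hft, hfL, -, hfav, -, hfvb⟩ := hQ f hf
    have hmemA : A e ∈ e := by
      have : A e ∈ s(A e, B e) := by simp
      rwa [← hea] at this
    have hmemB : B f ∈ f := by
      have : B f ∈ s(A f, B f) := by simp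
      rwa [← hfa] at this
    have hmemA' : A f ∈ f := by
      have : A f ∈ s(A f, B f) := by simp
      rwa [← hfa] at this
    have hmemB' : B e ∈ e := by
      have : B e ∈ s(A e, B e) := by simp
      rwa [← hea] at this
    obtain ⟨hne1, hnadj1⟩ := hM.2 e he f hf hef (A e) hmemA (B f) hmemB
    obtain ⟨hne2, hnadj2⟩ := hM.2 f hf e he hef.symm (A f) hmemA' (B e) hmemB'
    have hgt1 : ¬ (G.edist (A e) (B f) ≤ (m : ℕ∞)) := by
      intro hle
      exact hnadj1 ⟨⟨hne1, hle⟩, Or.inl ⟨hea1, hfb1⟩⟩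
    have hgt2 : ¬ (G.edist (A f) (B e) ≤ (m : ℕ∞)) := by
      intro hle
      exact hnadj2 ⟨⟨hne2, hle⟩, Or.inl ⟨hfa1, heb1⟩⟩
    have hb1 : G.edist (A e) (B f) ≤ ((T e + 1 + (L f - T f - 1) : ℕ) : ℕ∞) := by
      calc G.edist (A e) (B f) ≤ G.edist (A e) (U e) + G.edist (U e) (B f) :=
            SimpleGraph.edist_triangle
        _ ≤ G.edist (A e) (U e) + (G.edist (U e) (W f) + G.edist (W f) (B f)) := by
            gcongr
            exact SimpleGraph.edist_triangle
        _ ≤ (T e : ℕ∞) + (1 + ((L f - T f - 1 : ℕ) : ℕ∞)) := by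
            gcongr
        _ = ((T e + 1 + (L f - T f - 1) : ℕ) : ℕ∞) := by push_cast; ring
    have hb2 : G.edist (A f) (B e) ≤ ((T f + 1 + 1 + (L e - T e) : ℕ) : ℕ∞) := by
      have hc : G.edist (W f) (U e) ≤ 1 := by rwa [SimpleGraph.edist_comm]
      calc G.edist (A f) (B e) ≤ G.edist (A f) (W f) + G.edist (W f) (B e) :=
            SimpleGraph.edist_triangle
        _ ≤ G.edist (A f) (W f) + (G.edist (W f) (U e) + G.edist (U e) (B e)) := by
            gcongr
            exact SimpleGraph.edist_triangle
        _ ≤ ((T f + 1 : ℕ) : ℕ∞) + (1 + ((L e - T e : ℕ) : ℕ∞)) := by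
            gcongr
        _ = ((T f + 1 + 1 + (L e - T e) : ℕ) : ℕ∞) := by push_cast; ring
    have hn1 : m < T e + 1 + (L f - T f - 1) := by
      by_contra h
      exact hgt1 (hb1.trans (by exact_mod_cast Nat.le_of_not_lt h))
    have hn2 : m < T f + 1 + 1 + (L e - T e) := by
      by_contra h
      exact hgt2 (hb2.trans (by exact_mod_cast Nat.le_of_not_lt h))
    omega
  -- parity classes give induced matchings in the cut graph of G
  have main : ∀ M' : Finset (Sym2 V), M' ⊆ M →
      (∀ e ∈ M', ∀ f ∈ M', T e % 2 = T f % 2) → M'.card ≤ mim (cutGraph G σ i) := by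
    intro M' hsub hpar
    set φ : Sym2 V → Sym2 V := fun e => s(U e, W e) with hφ
    have noconf : ∀ e ∈ M', ∀ f ∈ M', e ≠ f → ¬ G.edist (U e) (W f) ≤ 1 := by
      intro e he f hf hef hc
      have h1 := conflict e (hsub he) f (hsub hf) hef hc
      have h2 := hpar e he f hf
      omega
    have sides : ∀ e ∈ M', (σ (U e) : ℕ) < i ∧ i ≤ (σ (W e) : ℕ) ∧ G.Adj (U e) (W e) := by
      intro e he
      obtain ⟨-, -, -, ha, hu, hv, -⟩ := hQ e (hsub he)
      exact ⟨hu, hv, ha⟩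
    have hInj : Set.InjOn φ ↑M' := by
      intro e he f hf h
      by_contra hef
      rw [hφ] at h
      simp only [Sym2.eq_iff] at h
      rcases h with ⟨h1, h2⟩ | ⟨h1, h2⟩
      · -- U e = U f : conflict
        apply noconf e (Finset.mem_coe.mp he) f (Finset.mem_coe.mp hf) hef
        rw [h1]
        exact le_of_eq (SimpleGraph.edist_eq_one_iff_adj.mpr (sides f (Finset.mem_coe.mp hf)).2.2)
      · -- U e = W f : impossible by sides
        obtain ⟨hu, -, -⟩ := sides e (Finset.mem_coe.mp he)
        obtain ⟨-, hv, -⟩ := sides f (Finset.mem_coe.mp hf)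
        rw [h1] at hu
        omega
    have hmatch : IsInducedMatching (cutGraph G σ i) (M'.image φ) := by
      constructor
      · intro e' he'
        rw [Finset.mem_coe, Finset.mem_image] at he'
        obtain ⟨e, he, rfl⟩ := he'
        obtain ⟨hu, hv, ha⟩ := sides e he
        rw [SimpleGraph.mem_edgeSet]
        exact ⟨ha, Or.inl ⟨hu, hv⟩⟩
      · intro e' he' f' hf' hne u hu v hv
        rw [Finset.mem_image] at he' hf'
        obtain ⟨e, he, rfl⟩ := he'
        obtain ⟨f, hf, rfl⟩ := hf'
        have hef : e ≠ f := fun h => hne (by rw [h])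
        obtain ⟨hue, hwe, hae⟩ := sides e he
        obtain ⟨huf, hwf, haf⟩ := sides f hf
        have hcef := noconf e he f hf hef
        have hcfe := noconf f hf e he hef.symm
        simp only [hφ, Sym2.mem_iff] at hu hv
        rcases hu with rfl | rfl <;> rcases hv with rfl | rfl
        · -- u = U e, v = U f
          constructor
          · intro h
            apply hcef
            rw [h]
            exact le_of_eq (SimpleGraph.edist_eq_one_iff_adj.mpr haf)
          · intro hadj
            rcases hadj.2 with ⟨h1, h2⟩ | ⟨h1, h2⟩ <;> omega
        · -- u = U e, v = W f
          constructor
          · intro h; rw [h] at hue; omega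
          · intro hadj
            exact hcef (le_of_eq (SimpleGraph.edist_eq_one_iff_adj.mpr hadj.1))
        · -- u = W e, v = U f
          constructor
          · intro h; rw [h] at hwe; omega
          · intro hadj
            exact hcfe (le_of_eq (SimpleGraph.edist_eq_one_iff_adj.mpr hadj.1.symm))
        · -- u = W e, v = W f
          constructor
          · intro h
            apply hcef
            rw [← h]
            exact le_of_eq (SimpleGraph.edist_eq_one_iff_adj.mpr hae)
          · intro hadj
            rcases hadj.2 with ⟨h1, h2⟩ | ⟨h1, h2⟩ <;> omega
      
    have hbdd : BddAbove {n : ℕ | ∃ N : Finset (Sym2 V),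
        IsInducedMatching (cutGraph G σ i) N ∧ N.card = n} := by
      refine ⟨Fintype.card (Sym2 V), ?_⟩
      rintro n ⟨N, -, rfl⟩
      exact N.card_le_univ
    have hle : (M'.image φ).card ≤ mim (cutGraph G σ i) :=
      le_csSup hbdd ⟨M'.image φ, hmatch, rfl⟩
    rwa [Finset.card_image_of_injOn hInj] at hle
  have hsplit := Finset.card_filter_add_card_filter_not (s := M)
    (p := fun e => T e % 2 = 0)
  have h0 := main (M.filter fun e => T e % 2 = 0) (Finset.filter_subset _ _) (by
    intro e he f hf
    rw [Finset.mem_filter] at he hf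
    omega)
  have h1 := main (M.filter fun e => ¬ T e % 2 = 0) (Finset.filter_subset _ _) (by
    intro e he f hf
    rw [Finset.mem_filter] at he hf
    omega)
  omega

/-- If `G` has MIM-width `k` under the layout `σ`, then for any `m ≥ 1` the `m`-th power
`Gᵐ` has MIM-width at most `2k` under the same layout `σ`. -/
theorem mw_graphPow_le {V : Type*} [Fintype V] (G : SimpleGraph V)
    (σ : V ≃ Fin (Fintype.card V)) (k m : ℕ) (hm : 1 ≤ m) (hσ : mw G σ = k) :
    mw (graphPow G m) σ ≤ 2 * k := by
  rw [← hσ, mw]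
  apply Finset.sup_le
  intro i hi
  have hne : {n : ℕ | ∃ M : Finset (Sym2 V),
      IsInducedMatching (cutGraph (graphPow G m) σ i) M ∧ M.card = n}.Nonempty := by
    refine ⟨0, ∅, ⟨?_, ?_⟩, by simp⟩
    · simp
    · simp
  rw [mim]
  apply csSup_le hne
  rintro n ⟨M, hM, rfl⟩
  calc M.card ≤ 2 * mim (cutGraph G σ i) := key G σ i m M hM
    _ ≤ 2 * mw G σ := by
        have : mim (cutGraph G σ i) ≤ mw G σ := by rw [mw]; exact Finset.le_sup (f := fun j => mim (cutGraph G σ j)) hi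
        omega


end LMW
end
end

section
/- For any graph G and any integer m ≥ 1, the linear MIM-width of the m-th power of G is at most twice the linear MIM-width of G, i.e., lmw(Gᵐ) ≤ 2·lmw(G). -/
open scoped Classical

noncomputable section

namespace LMW

variable {V : Type*} [Fintype V]

set_option linter.unusedSectionVars false

lemma cutGraph_adj {G : SimpleGraph V} {σ : V ≃ Fin (Fintype.card V)} {i : ℕ} {x y : V} :
    (cutGraph G σ i).Adj x y ↔ G.Adj x y ∧
      (((σ x : ℕ) < i ∧ i ≤ (σ y : ℕ)) ∨ ((σ y : ℕ) < i ∧ i ≤ (σ x : ℕ))) := Iff.rfl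

lemma graphPow_adj {G : SimpleGraph V} {m : ℕ} {x y : V} :
    (graphPow G m).Adj x y ↔ x ≠ y ∧ G.edist x y ≤ m := Iff.rfl

section helpers

variable {W : Type*} {G : SimpleGraph W}

lemma edist_getVert_le_s4 {u v : W} (p : G.Walk u v) (t : ℕ) :
    G.edist u (p.getVert t) ≤ (t : ℕ∞) := by
  induction t with
  | zero => simp [p.getVert_zero]
  | succ n ih =>
    by_cases h : n < p.length
    · calc G.edist u (p.getVert (n + 1))
          ≤ G.edist u (p.getVert n) + G.edist (p.getVert n) (p.getVert (n + 1)) :=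
            SimpleGraph.edist_triangle
        _ ≤ (n : ℕ∞) + 1 := add_le_add ih
            (SimpleGraph.edist_eq_one_iff_adj.mpr (p.adj_getVert_succ h)).le
        _ = ((n + 1 : ℕ) : ℕ∞) := by push_cast; rfl
    · have hgv : p.getVert (n + 1) = p.getVert n := by
        rw [p.getVert_of_length_le (by omega), p.getVert_of_length_le (by omega)]
      rw [hgv]
      exact le_trans ih (by exact_mod_cast Nat.le_succ n)

lemma edist_getVert_end_le {u v : W} (p : G.Walk u v) {t : ℕ} (ht : t ≤ p.length) :
    G.edist (p.getVert t) v ≤ ((p.length - t : ℕ) : ℕ∞) := by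
  have h := edist_getVert_le_s4 p.reverse (p.length - t)
  rw [SimpleGraph.Walk.getVert_reverse] at h
  have h2 : p.length - (p.length - t) = t := by omega
  rw [h2] at h
  rw [SimpleGraph.edist_comm]
  exact h

lemma cross_edist {a u v' b : W} {α c β : ℕ}
    (h1 : G.edist a u ≤ (α : ℕ∞)) (h2 : G.edist u v' ≤ (c : ℕ∞))
    (h3 : G.edist v' b ≤ (β : ℕ∞)) :
    G.edist a b ≤ ((α + c + β : ℕ) : ℕ∞) := by
  calc G.edist a b ≤ G.edist a u + G.edist u b := SimpleGraph.edist_triangle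
    _ ≤ G.edist a u + (G.edist u v' + G.edist v' b) :=
        add_le_add le_rfl SimpleGraph.edist_triangle
    _ ≤ (α : ℕ∞) + ((c : ℕ∞) + (β : ℕ∞)) := add_le_add h1 (add_le_add h2 h3)
    _ = ((α + c + β : ℕ) : ℕ∞) := by push_cast; ring

end helpers


-- (assume previous defs; test in isolation with plain graph)
lemma exists_cross {W : Type*} {G : SimpleGraph W} {m k : ℕ} (pos : W → ℕ)
    {a b : W} (ha : pos a < k) (hb : k ≤ pos b) (hab : G.edist a b ≤ (m : ℕ∞)) :
    ∃ u v : W, ∃ t β : ℕ, pos u < k ∧ k ≤ pos v ∧ G.Adj u v ∧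
      G.edist a u ≤ (t : ℕ∞) ∧ G.edist v b ≤ (β : ℕ∞) ∧ β + t + 1 ≤ m := by
  have hne : G.edist a b ≠ ⊤ := by
    intro h
    rw [h] at hab
    simp [h] at hab
  obtain ⟨p, hp⟩ := SimpleGraph.exists_walk_of_edist_ne_top hne
  have hLm : p.length ≤ m := by
    have : (p.length : ℕ∞) ≤ (m : ℕ∞) := hp ▸ hab
    exact_mod_cast this
  have hex : ∃ n, ¬ (pos (p.getVert n) < k) := ⟨p.length, by rw [p.getVert_length]; omega⟩
  set n := Nat.find hex with hn
  have hspec : ¬ (pos (p.getVert n) < k) := Nat.find_spec hex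
  have hn0 : n ≠ 0 := by
    intro h
    rw [h, p.getVert_zero] at hspec
    exact hspec ha
  have hnle : n ≤ p.length := Nat.find_le (by rw [p.getVert_length]; omega)
  set t := n - 1 with htdef
  have htn : t + 1 = n := by omega
  have hu : pos (p.getVert t) < k := by
    by_contra hcon
    exact absurd (Nat.find_min hex (show t < n by omega)) (by simpa using hcon)
  have hv : k ≤ pos (p.getVert (t + 1)) := by rw [htn]; omega
  refine ⟨p.getVert t, p.getVert (t + 1), t, p.length - t - 1, hu, hv,
    p.adj_getVert_succ (by omega), ?_, ?_, by omega⟩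
  · exact edist_getVert_le_s4 p t
  · have h := edist_getVert_end_le p (show t + 1 ≤ p.length by omega)
    have : p.length - (t + 1) = p.length - t - 1 := by omega
    rwa [this] at h


lemma conflict_core {W : Type*} {G : SimpleGraph W} {m : ℕ}
    {a₁ b₁ u₁ v₁ a₂ b₂ u₂ v₂ : W} {t₁ β₁ t₂ β₂ : ℕ}
    (hau₁ : G.edist a₁ u₁ ≤ (t₁ : ℕ∞)) (hvb₁ : G.edist v₁ b₁ ≤ (β₁ : ℕ∞))
    (huv₁ : G.Adj u₁ v₁)
    (hau₂ : G.edist a₂ u₂ ≤ (t₂ : ℕ∞)) (hvb₂ : G.edist v₂ b₂ ≤ (β₂ : ℕ∞))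
    (huv₂ : G.Adj u₂ v₂)
    (hβ₁ : β₁ + t₁ + 1 ≤ m) (hβ₂ : β₂ + t₂ + 1 ≤ m)
    (hpar : t₁ % 2 = t₂ % 2)
    (hconf : u₁ = u₂ ∨ v₁ = v₂ ∨ G.Adj u₁ v₂ ∨ G.Adj u₂ v₁) :
    G.edist a₁ b₂ ≤ (m : ℕ∞) ∨ G.edist a₂ b₁ ≤ (m : ℕ∞) := by
  have e1 : G.edist u₁ v₁ ≤ ((1 : ℕ) : ℕ∞) := by
    exact_mod_cast (SimpleGraph.edist_eq_one_iff_adj.mpr huv₁).le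
  have e2 : G.edist u₂ v₂ ≤ ((1 : ℕ) : ℕ∞) := by
    exact_mod_cast (SimpleGraph.edist_eq_one_iff_adj.mpr huv₂).le
  have cast_le : ∀ {x y : ℕ}, x ≤ y → ((x : ℕ∞) ≤ (y : ℕ∞)) := fun h => by exact_mod_cast h
  rcases hconf with h | h | h | h
  · -- u₁ = u₂
    have X : G.edist a₁ b₂ ≤ ((t₁ + 1 + β₂ : ℕ) : ℕ∞) :=
      cross_edist hau₁ (h ▸ e2) hvb₂
    have Y : G.edist a₂ b₁ ≤ ((t₂ + 1 + β₁ : ℕ) : ℕ∞) :=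
      cross_edist hau₂ (h ▸ e1) hvb₁
    have : t₁ + 1 + β₂ ≤ m ∨ t₂ + 1 + β₁ ≤ m := by omega
    rcases this with h' | h'
    · exact Or.inl (X.trans (cast_le h'))
    · exact Or.inr (Y.trans (cast_le h'))
  · -- v₁ = v₂
    have X : G.edist a₁ b₂ ≤ ((t₁ + 1 + β₂ : ℕ) : ℕ∞) :=
      cross_edist hau₁ e1 (h ▸ hvb₂)
    have Y : G.edist a₂ b₁ ≤ ((t₂ + 1 + β₁ : ℕ) : ℕ∞) :=
      cross_edist hau₂ e2 (h ▸ hvb₁)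
    have : t₁ + 1 + β₂ ≤ m ∨ t₂ + 1 + β₁ ≤ m := by omega
    rcases this with h' | h'
    · exact Or.inl (X.trans (cast_le h'))
    · exact Or.inr (Y.trans (cast_le h'))
  · -- Adj u₁ v₂
    have e3 : G.edist u₁ v₂ ≤ ((1 : ℕ) : ℕ∞) := by
      exact_mod_cast (SimpleGraph.edist_eq_one_iff_adj.mpr h).le
    have e3' : G.edist v₂ u₁ ≤ ((1 : ℕ) : ℕ∞) := by
      exact_mod_cast (SimpleGraph.edist_eq_one_iff_adj.mpr h.symm).le
    have X : G.edist a₁ b₂ ≤ ((t₁ + 1 + β₂ : ℕ) : ℕ∞) :=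
      cross_edist hau₁ e3 hvb₂
    have hmid : G.edist a₂ u₁ ≤ ((t₂ + 1 + 1 : ℕ) : ℕ∞) :=
      cross_edist hau₂ e2 e3'
    have Y : G.edist a₂ b₁ ≤ (((t₂ + 1 + 1) + 1 + β₁ : ℕ) : ℕ∞) :=
      cross_edist hmid e1 hvb₁
    have : t₁ + 1 + β₂ ≤ m ∨ (t₂ + 1 + 1) + 1 + β₁ ≤ m := by omega
    rcases this with h' | h'
    · exact Or.inl (X.trans (cast_le h'))
    · exact Or.inr (Y.trans (cast_le h'))
  · -- Adj u₂ v₁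
    have e3 : G.edist u₂ v₁ ≤ ((1 : ℕ) : ℕ∞) := by
      exact_mod_cast (SimpleGraph.edist_eq_one_iff_adj.mpr h).le
    have e3' : G.edist v₁ u₂ ≤ ((1 : ℕ) : ℕ∞) := by
      exact_mod_cast (SimpleGraph.edist_eq_one_iff_adj.mpr h.symm).le
    have Y : G.edist a₂ b₁ ≤ ((t₂ + 1 + β₁ : ℕ) : ℕ∞) :=
      cross_edist hau₂ e3 hvb₁
    have hmid : G.edist a₁ u₂ ≤ ((t₁ + 1 + 1 : ℕ) : ℕ∞) :=
      cross_edist hau₁ e1 e3'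
    have X : G.edist a₁ b₂ ≤ (((t₁ + 1 + 1) + 1 + β₂ : ℕ) : ℕ∞) :=
      cross_edist hmid e2 hvb₂
    have : (t₁ + 1 + 1) + 1 + β₂ ≤ m ∨ t₂ + 1 + β₁ ≤ m := by omega
    rcases this with h' | h'
    · exact Or.inl (X.trans (cast_le h'))
    · exact Or.inr (Y.trans (cast_le h'))



lemma card_le_two_mul_mim {G : SimpleGraph V} {σ : V ≃ Fin (Fintype.card V)} {k m : ℕ}
    {M : Finset (Sym2 V)} (hM : IsInducedMatching (cutGraph (graphPow G m) σ k) M) :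
    M.card ≤ 2 * mim (cutGraph G σ k) := by
  classical
  have hdata : ∀ e ∈ M, ∃ a b u v : V, ∃ t β : ℕ,
      e = s(a, b) ∧ (σ a : ℕ) < k ∧ k ≤ (σ b : ℕ) ∧ (σ u : ℕ) < k ∧ k ≤ (σ v : ℕ) ∧
      G.Adj u v ∧ G.edist a u ≤ (t : ℕ∞) ∧ G.edist v b ≤ (β : ℕ∞) ∧ β + t + 1 ≤ m := by
    intro e he
    have hedge : e ∈ (cutGraph (graphPow G m) σ k).edgeSet := hM.1 he
    clear he
    induction e using Sym2.ind with
    | _ x y =>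
      rw [SimpleGraph.mem_edgeSet, cutGraph_adj] at hedge
      obtain ⟨hxy, hcross⟩ := hedge
      rw [graphPow_adj] at hxy
      rcases hcross with ⟨hx, hy⟩ | ⟨hy, hx⟩
      · obtain ⟨u, v, t, β, h1, h2, h3, h4, h5, h6⟩ :=
          exists_cross (fun w => (σ w : ℕ)) hx hy hxy.2
        exact ⟨x, y, u, v, t, β, rfl, hx, hy, h1, h2, h3, h4, h5, h6⟩
      · obtain ⟨u, v, t, β, h1, h2, h3, h4, h5, h6⟩ :=
          exists_cross (fun w => (σ w : ℕ)) hy hx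
            (by rw [SimpleGraph.edist_comm]; exact hxy.2)
        exact ⟨y, x, u, v, t, β, Sym2.eq_swap, hy, hx, h1, h2, h3, h4, h5, h6⟩
  choose a b u v t β hprop using hdata
  have key : ∀ e (he : e ∈ M), ∀ f (hf : f ∈ M), e ≠ f →
      t e he % 2 = t f hf % 2 →
      ∀ w w', (w = u e he ∨ w = v e he) → (w' = u f hf ∨ w' = v f hf) →
      w ≠ w' ∧ ¬ (cutGraph G σ k).Adj w w' := by
    intro e he f hf hef hpar w w' hw hw'
    obtain ⟨he1, ha1, hb1, hu1, hv1, huv1, hau1, hvb1, hβ1⟩ := hprop e he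
    obtain ⟨he2, ha2, hb2, hu2, hv2, huv2, hau2, hvb2, hβ2⟩ := hprop f hf
    by_contra hcon
    push_neg at hcon
    have hcon' : w = w' ∨ (cutGraph G σ k).Adj w w' := by
      rcases Classical.em (w = w') with h | h
      · exact Or.inl h
      · exact Or.inr (hcon h)
    have hconf : u e he = u f hf ∨ v e he = v f hf ∨
        G.Adj (u e he) (v f hf) ∨ G.Adj (u f hf) (v e he) := by
      rcases hw with rfl | rfl <;> rcases hw' with rfl | rfl <;>
        rcases hcon' with h | h
      · exact Or.inl h
      · rw [cutGraph_adj] at h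
        omega
      · exfalso; rw [h] at hu1; omega
      · rw [cutGraph_adj] at h
        exact Or.inr (Or.inr (Or.inl h.1))
      · exfalso; rw [h] at hv1; omega
      · rw [cutGraph_adj] at h
        exact Or.inr (Or.inr (Or.inr h.1.symm))
      · exact Or.inr (Or.inl h)
      · rw [cutGraph_adj] at h
        omega
    have hcore := conflict_core hau1 hvb1 huv1 hau2 hvb2 huv2 hβ1 hβ2 hpar hconf
    rcases hcore with hd | hd
    · have hP := (hM.2 e he f hf hef (a e he)
        (by have h := Sym2.mem_mk_left (a e he) (b e he); rwa [← he1] at h) (b f hf)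
        (by have h := Sym2.mem_mk_right (a f hf) (b f hf); rwa [← he2] at h)).2
      apply hP
      rw [cutGraph_adj]
      refine ⟨graphPow_adj.mpr ⟨?_, hd⟩, Or.inl ⟨ha1, hb2⟩⟩
      intro hq; rw [hq] at ha1; omega
    · have hP := (hM.2 f hf e he hef.symm (a f hf)
        (by have h := Sym2.mem_mk_left (a f hf) (b f hf); rwa [← he2] at h) (b e he)
        (by have h := Sym2.mem_mk_right (a e he) (b e he); rwa [← he1] at h)).2
      apply hP
      rw [cutGraph_adj]
      refine ⟨graphPow_adj.mpr ⟨?_, hd⟩, Or.inl ⟨ha2, hb1⟩⟩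
      intro hq; rw [hq] at ha2; omega
  have hbdd : BddAbove {n : ℕ | ∃ M' : Finset (Sym2 V),
      IsInducedMatching (cutGraph G σ k) M' ∧ M'.card = n} := by
    refine ⟨Fintype.card (Sym2 V), ?_⟩
    rintro n ⟨M', _, rfl⟩
    exact Finset.card_le_univ M'
  have claim : ∀ S : Finset {e // e ∈ M},
      (∀ x ∈ S, ∀ y ∈ S, t x.1 x.2 % 2 = t y.1 y.2 % 2) →
      S.card ≤ mim (cutGraph G σ k) := by
    intro S hS
    set F : {e // e ∈ M} → Sym2 V := fun x => s(u x.1 x.2, v x.1 x.2) with hF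
    have hinj : Set.InjOn F S := by
      intro x hx y hy hxy
      by_contra hne
      have hxy1 : x.1 ≠ y.1 := fun h => hne (Subtype.ext h)
      have hmem : u x.1 x.2 = u y.1 y.2 ∨ u x.1 x.2 = v y.1 y.2 := by
        have hm : u x.1 x.2 ∈ F y := by
          rw [← hxy]
          exact Sym2.mem_mk_left _ _
        simpa [hF, Sym2.mem_iff] using hm
      exact (key x.1 x.2 y.1 y.2 hxy1 (hS x hx y hy) _ _ (Or.inl rfl) hmem).1 rfl
    have hN : IsInducedMatching (cutGraph G σ k) (S.image F) := by
      constructor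
      · intro e' he'
        simp only [Finset.coe_image, Set.mem_image, Finset.mem_coe] at he'
        obtain ⟨x, hx, rfl⟩ := he'
        rw [SimpleGraph.mem_edgeSet]
        obtain ⟨_, _, _, hu1, hv1, huv1, _, _, _⟩ := hprop x.1 x.2
        exact cutGraph_adj.mpr ⟨huv1, Or.inl ⟨hu1, hv1⟩⟩
      · intro e' he' f' hf' hef w hw w' hw'
        rw [Finset.mem_image] at he' hf'
        obtain ⟨x, hx, rfl⟩ := he'
        obtain ⟨y, hy, rfl⟩ := hf'
        have hxy1 : x.1 ≠ y.1 := by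
          intro h
          exact hef (congrArg F (Subtype.ext h))
        rw [show F x = s(u x.1 x.2, v x.1 x.2) from rfl, Sym2.mem_iff] at hw
        rw [show F y = s(u y.1 y.2, v y.1 y.2) from rfl, Sym2.mem_iff] at hw'
        exact key x.1 x.2 y.1 y.2 hxy1 (hS x hx y hy) w w' hw hw'
    calc S.card = (S.image F).card := (Finset.card_image_of_injOn hinj).symm
      _ ≤ mim (cutGraph G σ k) := le_csSup hbdd ⟨S.image F, hN, rfl⟩
  have h0 := claim (M.attach.filter fun x => t x.1 x.2 % 2 = 0) (by
    intro x hx y hy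
    have := (Finset.mem_filter.mp hx).2
    have := (Finset.mem_filter.mp hy).2
    omega)
  have h1 := claim (M.attach.filter fun x => ¬ (t x.1 x.2 % 2 = 0)) (by
    intro x hx y hy
    have := (Finset.mem_filter.mp hx).2
    have := (Finset.mem_filter.mp hy).2
    omega)
  have hsplit := Finset.card_filter_add_card_filter_not
    (s := M.attach) (p := fun x => t x.1 x.2 % 2 = 0)
  have hatt : M.attach.card = M.card := Finset.card_attach
  omega

lemma mim_pow_le {G : SimpleGraph V} {σ : V ≃ Fin (Fintype.card V)} {k m : ℕ} :
    mim (cutGraph (graphPow G m) σ k) ≤ 2 * mim (cutGraph G σ k) := by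
  apply csSup_le
  · exact ⟨0, ∅, ⟨by simp, fun e he => absurd he (Finset.notMem_empty e)⟩, rfl⟩
  · rintro n ⟨M, hM, rfl⟩
    exact card_le_two_mul_mim hM

lemma mw_pow_le {G : SimpleGraph V} {σ : V ≃ Fin (Fintype.card V)} {m : ℕ} :
    mw (graphPow G m) σ ≤ 2 * mw G σ := by
  apply Finset.sup_le
  intro k hk
  exact le_trans mim_pow_le (Nat.mul_le_mul_left 2 (Finset.le_sup (f := fun i => mim (cutGraph G σ i)) hk))

/-- For any graph `G` and any `m ≥ 1`, `lmw (Gᵐ) ≤ 2 · lmw G`. -/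
theorem lmw_graphPow_le {V : Type*} [Fintype V] (G : SimpleGraph V) (m : ℕ) (hm : 1 ≤ m) :
    lmw (graphPow G m) ≤ 2 * lmw G := by
  have hne : {n : ℕ | ∃ σ : V ≃ Fin (Fintype.card V), mw G σ = n}.Nonempty :=
    ⟨mw G (Fintype.equivFin V), Fintype.equivFin V, rfl⟩
  obtain ⟨σ, hσ⟩ : ∃ σ : V ≃ Fin (Fintype.card V), mw G σ = lmw G := Nat.sInf_mem hne
  calc lmw (graphPow G m) ≤ mw (graphPow G m) σ := Nat.sInf_le ⟨σ, rfl⟩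
    _ ≤ 2 * mw G σ := mw_pow_le
    _ = 2 * lmw G := by rw [hσ]

end LMW
end
end

section
/- For every integer k ≥ 0 there exists a tree T such that lmw(T) = k and lmw(T²) = k. In other words, the lower bound lmw(T²) ≥ lmw(T) for trees is tight for every value k of the linear MIM-width. -/
open scoped Classical

noncomputable section

namespace LMW

variable {V : Type*} [Fintype V]

/-! ## Parent graphs -/

def pg {n : ℕ} (p : Fin n → Fin n) : SimpleGraph (Fin n) where
  Adj x y := x ≠ y ∧ (p x = y ∨ p y = x)
  symm := ⟨fun _ _ h => ⟨h.1.symm, h.2.symm⟩⟩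
  loopless := ⟨fun _ h => h.1 rfl⟩

section Parent

variable {n : ℕ} {p : Fin n → Fin n}

theorem pg_adj {x y : Fin n} : (pg p).Adj x y ↔ x ≠ y ∧ (p x = y ∨ p y = x) := Iff.rfl

/-- descend to the child-of-`m` ancestor -/
def desc (p : Fin n → Fin n) (hmono : ∀ x : Fin n, x.val + 1 < n → x.val < (p x).val)
    (m : ℕ) (hm : m < n) (x : Fin n) : Fin n :=
  if h : x.val < m ∧ (p x).val ≠ m then desc p hmono m hm (p x) else x
termination_by m - x.val
decreasing_by
  have h1 : x.val < (p x).val := hmono x (by omega)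
  omega

theorem desc_eq_self (hmono : ∀ x : Fin n, x.val + 1 < n → x.val < (p x).val)
    {m : ℕ} (hm : m < n) (x : Fin n) (hx : (p x).val = m) : desc p hmono m hm x = x := by
  rw [desc]
  simp [hx]

theorem desc_adj (hmono : ∀ x : Fin n, x.val + 1 < n → x.val < (p x).val)
    {m : ℕ} (hm : m < n) {x y : Fin n} (hadj : (pg p).Adj x y)
    (hx : x.val < m) (hy : y.val < m) :
    desc p hmono m hm x = desc p hmono m hm y := by
  rcases hadj with ⟨hne, hor⟩
  have key : ∀ a b : Fin n, p a = b → a.val < m → b.val < m →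
      desc p hmono m hm a = desc p hmono m hm b := by
    intro a b hab ha hb
    have h2 : (p a).val ≠ m := by rw [hab]; omega
    rw [desc, dif_pos ⟨ha, h2⟩, hab]
  rcases hor with h | h
  · exact key x y h hx hy
  · exact (key y x h hy hx).symm

theorem pg_child (hmono : ∀ x : Fin n, x.val + 1 < n → x.val < (p x).val)
    (htop : ∀ x : Fin n, x.val + 1 = n → p x = x) {u₀ z : Fin n}
    (hz : (pg p).Adj u₀ z) (hle : z ≤ u₀) : p z = u₀ := by
  rcases hz.2 with h | h
  · exfalso
    by_cases htp : u₀.val + 1 = n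
    · rw [htop u₀ htp] at h
      exact hz.1 h
    · have h2 : u₀.val < (p u₀).val := hmono u₀ (by omega)
      rw [h] at h2
      exact absurd hle (not_le.mpr (by exact_mod_cast h2))
  · exact h

theorem pg_lastedge (hmono : ∀ x : Fin n, x.val + 1 < n → x.val < (p x).val)
    (htop : ∀ x : Fin n, x.val + 1 = n → p x = x) {y : Fin n} :
    ∀ {a c : Fin n} (q : (pg p).Walk a c) (hm : c.val < n), y.val < c.val →
      (∀ z ∈ q.support, z ≤ c) → a ≠ c →
      desc p hmono c.val hm a = y → s(c, y) ∈ q.edges := by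
  intro a c q
  induction q with
  | nil => intro _ _ _ ha _; exact absurd rfl ha
  | cons h q ih =>
    rename_i a b c
    intro hm hy hsupp hne hdesc
    have hb : b ∈ (SimpleGraph.Walk.cons h q).support := by
      simp [SimpleGraph.Walk.support_cons]
    by_cases hbu : b = c
    · subst hbu
      have hau : a < b := lt_of_le_of_ne (hsupp a (by simp)) hne
      have hpa : p a = b := pg_child hmono htop h.symm (le_of_lt hau)
      have hda : desc p hmono b.val hm a = a :=
        desc_eq_self hmono hm a (by rw [hpa])
      rw [hda] at hdesc
      subst hdesc
      simp [SimpleGraph.Walk.edges_cons, Sym2.eq_swap]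
    · have hblt : b.val < c.val := by
        have := hsupp b hb
        exact lt_of_le_of_ne (by exact_mod_cast this) (fun hc => hbu (Fin.ext hc))
      have halt : a.val < c.val := by
        have := hsupp a (by simp)
        exact lt_of_le_of_ne (by exact_mod_cast this) (fun hc => hne (Fin.ext hc))
      have hdb : desc p hmono c.val hm b = y := by
        rw [← desc_adj hmono hm h halt hblt]; exact hdesc
      have := ih hm hy (fun z hz => hsupp z (by simp [SimpleGraph.Walk.support_cons, hz]))
        hbu hdb
      simp only [SimpleGraph.Walk.edges_cons, List.mem_cons]
      right; exact this

theorem pg_acyclic (hmono : ∀ x : Fin n, x.val + 1 < n → x.val < (p x).val)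
    (htop : ∀ x : Fin n, x.val + 1 = n → p x = x) : (pg p).IsAcyclic := by
  intro v w hw
  classical
  have hsne : w.support.toFinset.Nonempty := by
    simp [List.toFinset_nonempty_iff, SimpleGraph.Walk.support_ne_nil]
  set u₀ : Fin n := w.support.toFinset.max' hsne with hu₀
  have hu₀mem : u₀ ∈ w.support := by
    have := w.support.toFinset.max'_mem hsne
    simpa using this
  have hu₀max : ∀ z ∈ w.support, z ≤ u₀ := by
    intro z hz
    exact w.support.toFinset.le_max' z (by simpa using hz)
  have hw' : (w.rotate u₀ hu₀mem).IsCycle := hw.rotate hu₀mem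
  have hsupp' : ∀ z ∈ (w.rotate u₀ hu₀mem).support, z ≤ u₀ := by
    intro z hz
    rw [SimpleGraph.Walk.support_eq_cons] at hz
    rcases List.mem_cons.mp hz with h | h
    · exact h.le
    · exact hu₀max z (List.mem_of_mem_tail
        (((SimpleGraph.Walk.support_rotate w u₀ hu₀mem).mem_iff).mp h))
  revert hw' hsupp'
  generalize w.rotate u₀ hu₀mem = w'
  intro hw' hsupp'
  cases w' with
  | nil => exact hw'.ne_nil rfl
  | cons h₁ q =>
    rename_i y
    have hsq : ∀ z ∈ q.support, z ≤ u₀ := by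
      intro z hz
      exact hsupp' z (by simp [SimpleGraph.Walk.support_cons, hz])
    have hyle : y ≤ u₀ := hsq y q.start_mem_support
    have hpy : p y = u₀ := pg_child hmono htop h₁ hyle
    have hne_y : y ≠ u₀ := h₁.ne'
    have hylt : y.val < u₀.val :=
      lt_of_le_of_ne (by exact_mod_cast hyle) (fun hc => hne_y (Fin.ext hc))
    have hdy : desc p hmono u₀.val u₀.isLt y = y :=
      desc_eq_self hmono u₀.isLt y (by rw [hpy])
    have hmem : s(u₀, y) ∈ q.edges :=
      pg_lastedge hmono htop q u₀.isLt hylt hsq hne_y hdy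
    have ht : (SimpleGraph.Walk.cons h₁ q).edges.Nodup := hw'.edges_nodup
    rw [SimpleGraph.Walk.edges_cons] at ht
    exact (List.nodup_cons.mp ht).1 hmem

theorem pg_reach (hmono : ∀ x : Fin n, x.val + 1 < n → x.val < (p x).val)
    (hn : 0 < n) (x : Fin n) : (pg p).Reachable x ⟨n - 1, by omega⟩ := by
  have H : ∀ (d : ℕ) (x : Fin n), n - 1 - x.val ≤ d → (pg p).Reachable x ⟨n - 1, by omega⟩ := by
    intro d
    induction d with
    | zero =>
      intro x hx
      have hv : x.val = n - 1 := by omega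
      have : x = ⟨n - 1, by omega⟩ := Fin.ext (by simp [hv])
      exact this ▸ SimpleGraph.Reachable.refl _
    | succ d ih =>
      intro x hx
      by_cases hxe : x.val = n - 1
      · have : x = ⟨n - 1, by omega⟩ := Fin.ext (by simp [hxe])
        exact this ▸ SimpleGraph.Reachable.refl _
      · have hlt : x.val < (p x).val := hmono x (by omega)
        have hadj : (pg p).Adj x (p x) := ⟨fun hc => by rw [← hc] at hlt; omega, Or.inl rfl⟩
        exact hadj.reachable.trans (ih (p x) (by omega))
  exact H n x (by omega)

theorem pg_isTree (hmono : ∀ x : Fin n, x.val + 1 < n → x.val < (p x).val)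
    (htop : ∀ x : Fin n, x.val + 1 = n → p x = x) (hn : 0 < n) : (pg p).IsTree := by
  constructor
  · rw [SimpleGraph.connected_iff]
    exact ⟨fun a b => (pg_reach hmono hn a).trans (pg_reach hmono hn b).symm,
      ⟨⟨0, hn⟩⟩⟩
  · exact pg_acyclic hmono htop

/-- walk to the root, staying anywhere (used for connectivity of branches) -/
theorem pg_reach_aux (hmono : ∀ x : Fin n, x.val + 1 < n → x.val < (p x).val) (hn : 0 < n)
    (x : Fin n) : ∃ w : (pg p).Walk x ⟨n - 1, by omega⟩, True := by
  obtain ⟨w⟩ := pg_reach hmono hn x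
  exact ⟨w, trivial⟩

end Parent
/-! ## Square of a graph -/

theorem pow2_adj_iff {G : SimpleGraph V} {x y : V} :
    (graphPow G 2).Adj x y ↔ x ≠ y ∧ (G.Adj x y ∨ ∃ z, G.Adj x z ∧ G.Adj z y) := by
  constructor
  · rintro ⟨hne, hd⟩
    refine ⟨hne, ?_⟩
    have hnt : G.edist x y ≠ ⊤ := fun hc => by rw [hc] at hd; exact (by simp at hd)
    obtain ⟨w, hw⟩ := SimpleGraph.exists_walk_of_edist_ne_top hnt
    have hlen : w.length ≤ 2 := by
      have : (w.length : ℕ∞) ≤ 2 := hw ▸ hd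
      exact_mod_cast this
    cases w with
    | nil => exact absurd rfl hne
    | cons h w' =>
      cases w' with
      | nil => exact Or.inl h
      | cons h' w'' =>
        have : w''.length = 0 := by
          simp only [SimpleGraph.Walk.length_cons] at hlen
          omega
        have heq := w''.eq_of_length_eq_zero this
        subst heq
        exact Or.inr ⟨_, h, h'⟩
  · rintro ⟨hne, h | ⟨z, h1, h2⟩⟩
    · refine ⟨hne, le_trans (SimpleGraph.edist_le (SimpleGraph.Walk.cons h SimpleGraph.Walk.nil)) ?_⟩
      simp
    · refine ⟨hne, le_trans (SimpleGraph.edist_le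
        (SimpleGraph.Walk.cons h1 (SimpleGraph.Walk.cons h2 SimpleGraph.Walk.nil))) ?_⟩
      simp

theorem adj_pow2 {G : SimpleGraph V} {x y : V} (h : G.Adj x y) : (graphPow G 2).Adj x y :=
  pow2_adj_iff.mpr ⟨h.ne, Or.inl h⟩

section ParentSq

variable {n : ℕ} {p : Fin n → Fin n}

theorem pg_pow2_adj {x y : Fin n} :
    (graphPow (pg p) 2).Adj x y ↔ x ≠ y ∧
      (p x = y ∨ p y = x ∨ p x = p y ∨ p (p x) = y ∨ p (p y) = x) := by
  rw [pow2_adj_iff]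
  constructor
  · rintro ⟨hne, h | ⟨z, h1, h2⟩⟩
    · exact ⟨hne, by rcases h.2 with h | h <;> tauto⟩
    · refine ⟨hne, ?_⟩
      rcases h1.2 with ha | ha <;> rcases h2.2 with hb | hb
      · right; right; right; left; rw [ha]; exact hb
      · right; right; left; rw [ha, hb]
      · exact absurd (ha.symm.trans hb) hne
      · right; right; right; right; rw [hb]; exact ha
  · rintro ⟨hne, h⟩
    refine ⟨hne, ?_⟩
    have sib : ∀ a b : Fin n, a ≠ b → p a = p b →
        (pg p).Adj a b ∨ ∃ z, (pg p).Adj a z ∧ (pg p).Adj z b := by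
      intro a b hab hp
      by_cases h1 : p a = a
      · left; exact ⟨hab, Or.inr (by rw [← hp, h1])⟩
      · by_cases h2 : p b = b
        · left; exact ⟨hab, Or.inl (by rw [hp, h2])⟩
        · right
          exact ⟨p a, ⟨fun hc => h1 hc.symm, Or.inl rfl⟩, ⟨by rw [hp]; exact h2, Or.inr hp.symm⟩⟩
    have gp : ∀ a b : Fin n, a ≠ b → p (p a) = b →
        (pg p).Adj a b ∨ ∃ z, (pg p).Adj a z ∧ (pg p).Adj z b := by
      intro a b hab hpp
      by_cases h1 : p a = a
      · left; exact ⟨hab, Or.inl (by rw [← hpp, h1, h1])⟩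
      · by_cases h2 : p (p a) = p a
        · left; exact ⟨hab, Or.inl (by rw [← hpp, h2])⟩
        · right
          exact ⟨p a, ⟨fun hc => h1 hc.symm, Or.inl rfl⟩, ⟨fun hc => h2 (hpp.symm ▸ hc ▸ rfl), Or.inl hpp⟩⟩
    rcases h with h | h | h | h | h
    · exact Or.inl ⟨hne, Or.inl h⟩
    · exact Or.inl ⟨hne, Or.inr h⟩
    · rcases sib x y hne h with h | h
      · exact Or.inl h
      · exact Or.inr h
    · exact gp x y hne h
    · rcases gp y x hne.symm h with h | ⟨z, hz1, hz2⟩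
      · exact Or.inl h.symm
      · exact Or.inr ⟨z, hz2.symm, hz1.symm⟩

end ParentSq

/-! ## Basic lemmas about `mim`, `mw`, `lmw` -/

theorem isInducedMatching_empty (H : SimpleGraph V) : IsInducedMatching H ∅ :=
  ⟨by simp, by simp⟩

theorem card_le_mim {H : SimpleGraph V} {M : Finset (Sym2 V)} (h : IsInducedMatching H M) :
    M.card ≤ mim H :=
  le_csSup ⟨Fintype.card (Sym2 V), by rintro t ⟨M', _, rfl⟩; exact M'.card_le_univ⟩ ⟨M, h, rfl⟩

theorem mim_le {H : SimpleGraph V} {k : ℕ} (h : ∀ M, IsInducedMatching H M → M.card ≤ k) :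
    mim H ≤ k :=
  csSup_le ⟨0, ∅, isInducedMatching_empty H, by simp⟩ (by rintro t ⟨M, hM, rfl⟩; exact h M hM)

theorem le_mw {G : SimpleGraph V} {σ : V ≃ Fin (Fintype.card V)} {i : ℕ}
    (hi : i ∈ Finset.Ico 1 (Fintype.card V)) : mim (cutGraph G σ i) ≤ mw G σ := by
  exact Finset.le_sup (f := fun i => mim (cutGraph G σ i)) hi

theorem mw_le {G : SimpleGraph V} {σ : V ≃ Fin (Fintype.card V)} {k : ℕ}
    (h : ∀ i, 1 ≤ i → i < Fintype.card V → mim (cutGraph G σ i) ≤ k) : mw G σ ≤ k := by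
  unfold mw
  exact Finset.sup_le fun i hi => h i (Finset.mem_Ico.mp hi).1 (Finset.mem_Ico.mp hi).2

theorem lmw_eq {G : SimpleGraph V} {k : ℕ} (hub : ∃ σ, mw G σ ≤ k)
    (hlb : ∀ σ, k ≤ mw G σ) : lmw G = k := by
  obtain ⟨σ0, h0⟩ := hub
  have hk : mw G σ0 = k := le_antisymm h0 (hlb σ0)
  apply le_antisymm
  · exact Nat.sInf_le ⟨σ0, hk⟩
  · exact le_csInf ⟨k, σ0, hk⟩ (by rintro m ⟨σ, rfl⟩; exact hlb σ)

/-! ## Transfer of induced matchings along adjacency-preserving injections -/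

theorem transfer_matching {V' : Type*} [Fintype V'] {H : SimpleGraph V} {H' : SimpleGraph V'}
    {f : V' → V} (hinj : Function.Injective f)
    (hadj : ∀ x y, H'.Adj x y ↔ H.Adj (f x) (f y)) {M : Finset (Sym2 V')}
    (hM : IsInducedMatching H' M) :
    ∃ MM : Finset (Sym2 V), IsInducedMatching H MM ∧ MM.card = M.card ∧
      ∀ e ∈ MM, ∃ e' ∈ M, e = Sym2.map f e' := by
  classical
  have hmapinj : Function.Injective (Sym2.map f) := Sym2.map.injective hinj
  refine ⟨M.image (Sym2.map f), ⟨?_, ?_⟩, Finset.card_image_of_injective _ hmapinj, ?_⟩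
  · intro e he
    simp only [Finset.coe_image, Set.mem_image, Finset.mem_coe] at he
    obtain ⟨e', he', rfl⟩ := he
    induction e' using Sym2.ind with
    | _ a b =>
      have : H'.Adj a b := hM.1 he'
      simpa [SimpleGraph.mem_edgeSet] using (hadj a b).mp this
  · intro e he f' hf' hne u hu v hv
    rw [Finset.mem_image] at he hf'
    obtain ⟨e', he', rfl⟩ := he
    obtain ⟨f'', hf'', rfl⟩ := hf'
    have hne' : e' ≠ f'' := fun hc => hne (by rw [hc])
    obtain ⟨a, ha, rfl⟩ := Sym2.mem_map.mp hu
    obtain ⟨b, hb, rfl⟩ := Sym2.mem_map.mp hv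
    obtain ⟨h1, h2⟩ := hM.2 e' he' f'' hf'' hne' a ha b hb
    exact ⟨fun hc => h1 (hinj hc), fun hc => h2 ((hadj a b).mpr hc)⟩
  · intro e he
    rw [Finset.mem_image] at he
    obtain ⟨e', he', rfl⟩ := he
    exact ⟨e', he', rfl⟩

theorem transfer_matching_rev {V' : Type*} [Fintype V'] [Nonempty V'] {H : SimpleGraph V}
    {H' : SimpleGraph V'} {f : V' → V} (hinj : Function.Injective f)
    (hadj : ∀ x y, H'.Adj x y ↔ H.Adj (f x) (f y)) {M : Finset (Sym2 V)}
    (hM : IsInducedMatching H M) (hrange : ∀ e ∈ M, ∀ x ∈ e, ∃ x', f x' = x) :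
    ∃ M' : Finset (Sym2 V'), IsInducedMatching H' M' ∧ M'.card = M.card := by
  classical
  have : Nonempty (Sym2 V') := ⟨s(Classical.arbitrary V', Classical.arbitrary V')⟩
  have hedge : ∀ e' : Sym2 V', Sym2.map f e' ∈ H.edgeSet → e' ∈ H'.edgeSet := by
    intro e' he'
    induction e' using Sym2.ind with
    | _ a b =>
      simp only [Sym2.map_pair_eq, SimpleGraph.mem_edgeSet] at he' ⊢
      exact (hadj a b).mpr he'
  have hpre : ∀ e ∈ M, ∃ e' : Sym2 V', Sym2.map f e' = e := by
    intro e he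
    induction e using Sym2.ind with
    | _ a b =>
      obtain ⟨a', ha'⟩ := hrange _ he a (by simp)
      obtain ⟨b', hb'⟩ := hrange _ he b (by simp)
      exact ⟨s(a', b'), by simp [ha', hb']⟩
  set F : Sym2 V → Sym2 V' := fun e =>
    if h : ∃ e' : Sym2 V', Sym2.map f e' = e then h.choose else Classical.arbitrary _ with hF
  have hFspec : ∀ e ∈ M, Sym2.map f (F e) = e := by
    intro e he
    have h := hpre e he
    simp only [hF, dif_pos h]
    exact h.choose_spec
  refine ⟨M.image F, ⟨?_, ?_⟩, ?_⟩
  · intro e' he'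
    simp only [Finset.coe_image, Set.mem_image, Finset.mem_coe] at he'
    obtain ⟨e, he, rfl⟩ := he'
    exact hedge _ (by rw [hFspec e he]; exact hM.1 he)
  · intro e' he' f'' hf'' hne u hu v hv
    rw [Finset.mem_image] at he' hf''
    obtain ⟨e, he, rfl⟩ := he'
    obtain ⟨g, hg, rfl⟩ := hf''
    have hne2 : e ≠ g := fun hc => hne (by rw [hc])
    have hu2 : f u ∈ e := by rw [← hFspec e he]; exact Sym2.mem_map.mpr ⟨u, hu, rfl⟩
    have hv2 : f v ∈ g := by rw [← hFspec g hg]; exact Sym2.mem_map.mpr ⟨v, hv, rfl⟩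
    obtain ⟨h1, h2⟩ := hM.2 e he g hg hne2 (f u) hu2 (f v) hv2
    exact ⟨fun hc => h1 (by rw [hc]), fun hc => h2 ((hadj u v).mp hc)⟩
  · apply Finset.card_image_of_injOn
    intro e he g hg hFeg
    rw [← hFspec e he, ← hFspec g hg, hFeg]
/-! ## The concrete family of trees -/

def A : ℕ → ℕ
  | 0 => 3
  | k+1 => 3 * A k + 2

theorem A_succ (k : ℕ) : A (k+1) = 3 * A k + 2 := rfl

theorem A_ge (k : ℕ) : 3 ≤ A k := by
  induction k with
  | zero => norm_num [A]
  | succ k ih => rw [A_succ]; omega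

def rtp (k : ℕ) : Fin (A k) := ⟨A k - 1, by have := A_ge k; omega⟩

def par : ∀ k, Fin (A k) → Fin (A k)
  | 0 => fun x => if x.val = 0 then ⟨1, by have := A_ge 0; omega⟩ else ⟨2, by have := A_ge 0; omega⟩
  | (k+1) => fun x =>
    if hx : x.val < 3 * A k then
      if hr : x.val % A k = A k - 1 then ⟨3 * A k, by have hs := A_succ k; omega⟩
      else
        ⟨A k * (x.val / A k) +
            (par k ⟨x.val % A k, Nat.mod_lt _ (by have := A_ge k; omega)⟩).val, by
          have hs := A_succ k
          have h1 : x.val / A k < 3 := Nat.div_lt_of_lt_mul (by omega)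
          have h2 := (par k ⟨x.val % A k, Nat.mod_lt _ (by have := A_ge k; omega)⟩).isLt
          have h3 : A k * (x.val / A k) ≤ A k * 2 := Nat.mul_le_mul_left _ (by omega)
          omega⟩
    else if x.val = 3 * A k then ⟨3 * A k + 1, by have hs := A_succ k; omega⟩ else x

def cpy {k : ℕ} (c : Fin 3) (x : Fin (A k)) : Fin (A (k+1)) :=
  ⟨A k * c.val + x.val, by
    have hx := x.isLt
    have hc : c.val ≤ 2 := by omega
    have hs := A_succ k
    have h3 : A k * c.val ≤ A k * 2 := Nat.mul_le_mul_left _ hc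
    omega⟩

def vtx (k : ℕ) : Fin (A (k+1)) := ⟨3 * A k, by have hs := A_succ k; omega⟩

def rnw (k : ℕ) : Fin (A (k+1)) := ⟨3 * A k + 1, by have hs := A_succ k; omega⟩

@[simp] theorem cpy_val {k} (c : Fin 3) (x : Fin (A k)) :
    (cpy c x).val = A k * c.val + x.val := rfl
@[simp] theorem vtx_val {k} : (vtx k).val = 3 * A k := rfl
@[simp] theorem rnw_val {k} : (rnw k).val = 3 * A k + 1 := rfl
@[simp] theorem rtp_val {k} : (rtp k).val = A k - 1 := rfl

theorem cpy_lt {k} (c : Fin 3) (x : Fin (A k)) : (cpy c x).val < 3 * A k := by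
  have hx := x.isLt
  have hc : c.val ≤ 2 := by omega
  have h3 : A k * c.val ≤ A k * 2 := Nat.mul_le_mul_left _ hc
  simp only [cpy_val]
  omega

theorem cpy_mod {k} (c : Fin 3) (x : Fin (A k)) : (cpy c x).val % A k = x.val := by
  simp only [cpy_val]
  rw [Nat.mul_add_mod]
  exact Nat.mod_eq_of_lt x.isLt

theorem cpy_div {k} (c : Fin 3) (x : Fin (A k)) : (cpy c x).val / A k = c.val := by
  simp only [cpy_val]
  rw [Nat.mul_add_div (by have := A_ge k; omega), Nat.div_eq_of_lt x.isLt]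
  omega

theorem cpy_inj {k} {c c' : Fin 3} {x x' : Fin (A k)} (h : cpy c x = cpy c' x') :
    c = c' ∧ x = x' := by
  have h1 := congrArg (fun z : Fin (A (k+1)) => z.val % A k) h
  have h2 := congrArg (fun z : Fin (A (k+1)) => z.val / A k) h
  simp only [cpy_mod, cpy_div] at h1 h2
  exact ⟨Fin.ext h2, Fin.ext h1⟩

theorem cpy_ne_vtx {k} (c : Fin 3) (x : Fin (A k)) : cpy c x ≠ vtx k := by
  intro h
  have h2 := congrArg Fin.val h
  have := cpy_lt c x
  simp only [vtx_val] at h2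
  omega

theorem cpy_ne_rnw {k} (c : Fin 3) (x : Fin (A k)) : cpy c x ≠ rnw k := by
  intro h
  have h2 := congrArg Fin.val h
  have := cpy_lt c x
  simp only [rnw_val] at h2
  omega

theorem vtx_ne_rnw {k} : vtx k ≠ rnw k := by
  intro h; have := congrArg Fin.val h; simp at this

theorem big_cases {k} (z : Fin (A (k+1))) :
    (∃ c x, z = cpy c x) ∨ z = vtx k ∨ z = rnw k := by
  have hz := z.isLt
  have hs := A_succ k
  have hA := A_ge k
  by_cases h1 : z.val < 3 * A k
  · left
    refine ⟨⟨z.val / A k, Nat.div_lt_of_lt_mul (by omega)⟩,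
      ⟨z.val % A k, Nat.mod_lt _ (by omega)⟩, Fin.ext ?_⟩
    simp only [cpy_val]
    exact (Nat.div_add_mod z.val (A k)).symm
  · by_cases h2 : z.val = 3 * A k
    · right; left; exact Fin.ext (by simp only [vtx_val]; omega)
    · right; right; exact Fin.ext (by simp only [rnw_val]; omega)

theorem mk_mod_eq {k} (c : Fin 3) (x : Fin (A k)) :
    ∀ (h : (cpy c x).val % A k < A k), (⟨(cpy c x).val % A k, h⟩ : Fin (A k)) = x :=
  fun _ => Fin.ext (cpy_mod c x)

theorem par_cpy_root {k} (c : Fin 3) : par (k+1) (cpy c (rtp k)) = vtx k := by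
  have h1 := cpy_lt c (rtp k)
  have h2 := cpy_mod c (rtp k)
  simp only [rtp_val] at h2
  simp only [par, h1, h2]
  rfl

theorem par_cpy_nr {k} (c : Fin 3) {x : Fin (A k)} (hx : x ≠ rtp k) :
    par (k+1) (cpy c x) = cpy c (par k x) := by
  have h1 := cpy_lt c x
  have h2 := cpy_mod c x
  have h3 := cpy_div c x
  have hxv : x.val ≠ A k - 1 := fun hc => hx (Fin.ext (by simp only [rtp_val]; exact hc))
  have hmod : ¬ ((cpy c x).val % A k = A k - 1) := by rw [h2]; exact hxv
  simp only [par, h1, hmod]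
  apply Fin.ext
  show A k * ((cpy c x).val / A k) +
      (par k ⟨(cpy c x).val % A k, Nat.mod_lt _ (by have := A_ge k; omega)⟩).val
    = A k * c.val + (par k x).val
  rw [h3, mk_mod_eq c x]

theorem par_vtx {k} : par (k+1) (vtx k) = rnw k := by
  have h1 : ¬ ((vtx k).val < 3 * A k) := by simp only [vtx_val]; omega
  simp only [par, h1]
  split_ifs with h h2 h3
  · exact h.elim
  · exact h.elim
  · rfl
  · exact absurd rfl h3

theorem par_rnw' {k} : par (k+1) (rnw k) = rnw k := by
  have h1 : ¬ ((rnw k).val < 3 * A k) := by simp only [rnw_val]; omega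
  simp only [par, h1]
  split_ifs with h h2 h3
  all_goals first
    | rfl
    | exact h.elim
    | (exfalso; revert h2 h3; simp only [rnw_val]; omega)
    | (exfalso; revert h2; simp only [rnw_val]; omega)

theorem par_rnw {k} : par (k+1) (rnw k) = rnw k := par_rnw'

theorem par_mono : ∀ k (x : Fin (A k)), x.val + 1 < A k → x.val < (par k x).val := by
  intro k
  induction k with
  | zero =>
    intro x hx
    have h3 : A 0 = 3 := rfl
    by_cases h : x.val = 0
    · simp only [par, h, if_true]; omega
    · simp only [par, h, if_false]; omega
  | succ k ih =>
    intro x hx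
    rcases big_cases x with ⟨c, y, rfl⟩ | rfl | rfl
    · by_cases hy : y = rtp k
      · rw [hy, par_cpy_root]
        have := cpy_lt c (rtp k)
        simp only [vtx_val]
        omega
      · rw [par_cpy_nr c hy]
        have hyy : y.val + 1 < A k := by
          have h5 := y.isLt
          have h6 : y.val ≠ A k - 1 := fun hc => hy (Fin.ext (by simp only [rtp_val]; exact hc))
          omega
        have := ih y hyy
        simp only [cpy_val]
        omega
    · rw [par_vtx]; simp only [vtx_val, rnw_val]; omega
    · have hs := A_succ k
      simp only [rnw_val] at hx
      omega

theorem par_top : ∀ k (x : Fin (A k)), x.val + 1 = A k → par k x = x := by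
  intro k x hx
  cases k with
  | zero =>
    have h3 : A 0 = 3 := rfl
    have h2 : x.val = 2 := by omega
    have h0 : ¬ (x.val = 0) := by omega
    apply Fin.ext
    simp only [par, h0, if_false]
    omega
  | succ k =>
    have hs := A_succ k
    rcases big_cases x with ⟨c, y, rfl⟩ | rfl | rfl
    · exfalso
      have := cpy_lt c y
      omega
    · simp only [vtx_val] at hx; omega
    · exact par_rnw

theorem par_rtp (k : ℕ) : par k (rtp k) = rtp k := by
  apply par_top
  have := A_ge k
  simp only [rtp_val]
  omega

def G (k : ℕ) : SimpleGraph (Fin (A k)) := pg (par k)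

theorem G_isTree (k : ℕ) : (G k).IsTree :=
  pg_isTree (par_mono k) (par_top k) (by have := A_ge k; omega)
/-! ## Adjacency structure of `G (k+1)` -/

section Adjacency

variable {k : ℕ}

theorem adj_cpy_iff {c : Fin 3} {x y : Fin (A k)} :
    (G (k+1)).Adj (cpy c x) (cpy c y) ↔ (G k).Adj x y := by
  constructor
  · rintro ⟨hne, h | h⟩
    · by_cases hx : x = rtp k
      · rw [hx, par_cpy_root] at h
        exact absurd h.symm (cpy_ne_vtx c y)
      · rw [par_cpy_nr c hx] at h
        exact ⟨fun hc => hne (by rw [hc]), Or.inl (cpy_inj h).2⟩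
    · by_cases hy : y = rtp k
      · rw [hy, par_cpy_root] at h
        exact absurd h.symm (cpy_ne_vtx c x)
      · rw [par_cpy_nr c hy] at h
        exact ⟨fun hc => hne (by rw [hc]), Or.inr (cpy_inj h).2⟩
  · rintro ⟨hne, h | h⟩
    · have hx : x ≠ rtp k := by
        intro hc
        rw [hc, par_rtp] at h
        exact hne (hc.trans h)
      refine ⟨fun hc => hne (cpy_inj hc).2, Or.inl ?_⟩
      rw [par_cpy_nr c hx, h]
    · have hy : y ≠ rtp k := by
        intro hc
        rw [hc, par_rtp] at h
        exact hne (h.symm.trans hc.symm)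
      refine ⟨fun hc => hne (cpy_inj hc).2, Or.inr ?_⟩
      rw [par_cpy_nr c hy, h]

theorem adj_cross {c c' : Fin 3} (hcc : c ≠ c') {x y : Fin (A k)} :
    ¬ (G (k+1)).Adj (cpy c x) (cpy c' y) := by
  rintro ⟨hne, h | h⟩
  · by_cases hx : x = rtp k
    · rw [hx, par_cpy_root] at h
      exact cpy_ne_vtx c' y h.symm
    · rw [par_cpy_nr c hx] at h
      exact hcc (cpy_inj h).1
  · by_cases hy : y = rtp k
    · rw [hy, par_cpy_root] at h
      exact cpy_ne_vtx c x h.symm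
    · rw [par_cpy_nr c' hy] at h
      exact hcc.symm (cpy_inj h).1

theorem adj_vtx_cpy {c : Fin 3} {x : Fin (A k)} :
    (G (k+1)).Adj (vtx k) (cpy c x) ↔ x = rtp k := by
  constructor
  · rintro ⟨hne, h | h⟩
    · rw [par_vtx] at h
      exact absurd h.symm (cpy_ne_rnw c x)
    · by_cases hx : x = rtp k
      · exact hx
      · rw [par_cpy_nr c hx] at h
        exact absurd h (cpy_ne_vtx c _)
  · rintro rfl
    exact ⟨(cpy_ne_vtx c _).symm, Or.inr (par_cpy_root c)⟩

theorem adj_vtx_rnw : (G (k+1)).Adj (vtx k) (rnw k) :=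
  ⟨vtx_ne_rnw, Or.inl par_vtx⟩

theorem adj_rnw_iff {z : Fin (A (k+1))} : (G (k+1)).Adj (rnw k) z ↔ z = vtx k := by
  constructor
  · rintro ⟨hne, h | h⟩
    · rw [par_rnw] at h
      exact absurd h hne
    · rcases big_cases z with ⟨c, x, rfl⟩ | rfl | rfl
      · by_cases hx : x = rtp k
        · rw [hx, par_cpy_root] at h
          exact absurd h vtx_ne_rnw
        · rw [par_cpy_nr c hx] at h
          exact absurd h (cpy_ne_rnw c _)
      · rfl
      · exact absurd rfl hne
  · rintro rfl
    exact adj_vtx_rnw.symm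

theorem cross_edge_plain {z w : Fin (A (k+1))} (h : (G (k+1)).Adj z w) :
    (∃ c x y, z = cpy c x ∧ w = cpy c y) ∨ z = vtx k ∨ w = vtx k := by
  rcases big_cases z with ⟨c, x, rfl⟩ | rfl | rfl
  · rcases big_cases w with ⟨c', y, rfl⟩ | rfl | rfl
    · by_cases hcc : c = c'
      · subst hcc; exact Or.inl ⟨c, x, y, rfl, rfl⟩
      · exact absurd h (adj_cross hcc)
    · exact Or.inr (Or.inr rfl)
    · exact absurd (adj_rnw_iff.mp h.symm) (cpy_ne_vtx c x)
  · exact Or.inr (Or.inl rfl)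
  · exact Or.inr (Or.inr (adj_rnw_iff.mp h))

/-! square adjacency -/

theorem adj2_cpy_iff {c : Fin 3} {x y : Fin (A k)} :
    (graphPow (G (k+1)) 2).Adj (cpy c x) (cpy c y) ↔ (graphPow (G k) 2).Adj x y := by
  show (graphPow (pg (par (k+1))) 2).Adj _ _ ↔ (graphPow (pg (par k)) 2).Adj _ _
  rw [pg_pow2_adj, pg_pow2_adj]
  constructor
  · rintro ⟨hne, h⟩
    have hxy : x ≠ y := fun hc => hne (by rw [hc])
    refine ⟨hxy, ?_⟩
    rcases h with h | h | h | h | h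
    · by_cases hx : x = rtp k
      · rw [hx, par_cpy_root] at h; exact absurd h.symm (cpy_ne_vtx c y)
      · rw [par_cpy_nr c hx] at h; exact Or.inl (cpy_inj h).2
    · by_cases hy : y = rtp k
      · rw [hy, par_cpy_root] at h; exact absurd h.symm (cpy_ne_vtx c x)
      · rw [par_cpy_nr c hy] at h; exact Or.inr (Or.inl (cpy_inj h).2)
    · by_cases hx : x = rtp k
      · by_cases hy : y = rtp k
        · exact absurd (hx.trans hy.symm) hxy
        · rw [hx, par_cpy_root, par_cpy_nr c hy] at h
          exact absurd h.symm (cpy_ne_vtx c _)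
      · by_cases hy : y = rtp k
        · rw [hy, par_cpy_root, par_cpy_nr c hx] at h
          exact absurd h (cpy_ne_vtx c _)
        · rw [par_cpy_nr c hx, par_cpy_nr c hy] at h
          exact Or.inr (Or.inr (Or.inl (cpy_inj h).2))
    · by_cases hx : x = rtp k
      · rw [hx, par_cpy_root, par_vtx] at h
        exact absurd h.symm (cpy_ne_rnw c y)
      · rw [par_cpy_nr c hx] at h
        by_cases hpx : par k x = rtp k
        · rw [hpx, par_cpy_root] at h
          exact absurd h.symm (cpy_ne_vtx c y)
        · rw [par_cpy_nr c hpx] at h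
          exact Or.inr (Or.inr (Or.inr (Or.inl (cpy_inj h).2)))
    · by_cases hy : y = rtp k
      · rw [hy, par_cpy_root, par_vtx] at h
        exact absurd h.symm (cpy_ne_rnw c x)
      · rw [par_cpy_nr c hy] at h
        by_cases hpy : par k y = rtp k
        · rw [hpy, par_cpy_root] at h
          exact absurd h.symm (cpy_ne_vtx c x)
        · rw [par_cpy_nr c hpy] at h
          exact Or.inr (Or.inr (Or.inr (Or.inr (cpy_inj h).2)))
  · rintro ⟨hne, h⟩
    have hcne : cpy c x ≠ cpy c y := fun hc => hne (cpy_inj hc).2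
    refine ⟨hcne, ?_⟩
    rcases h with h | h | h | h | h
    · have hx : x ≠ rtp k := by
        intro hc; rw [hc, par_rtp] at h; exact hne (hc.trans h)
      exact Or.inl (by rw [par_cpy_nr c hx, h])
    · have hy : y ≠ rtp k := by
        intro hc; rw [hc, par_rtp] at h; exact hne (h.symm.trans hc.symm)
      exact Or.inr (Or.inl (by rw [par_cpy_nr c hy, h]))
    · by_cases hx : x = rtp k
      · -- then par y = rtp = x, so y is a child of x
        have hpy : par k y = x := by
          rw [hx, par_rtp] at h
          exact h.symm.trans hx.symm
        have hy : y ≠ rtp k := fun hc => hne (hx.trans hc.symm)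
        exact Or.inr (Or.inl (by rw [par_cpy_nr c hy, hpy]))
      · by_cases hy : y = rtp k
        · have hpx : par k x = y := by
            rw [hy, par_rtp] at h
            exact h.trans hy.symm
          exact Or.inl (by rw [par_cpy_nr c hx, hpx])
        · exact Or.inr (Or.inr (Or.inl (by rw [par_cpy_nr c hx, par_cpy_nr c hy, h])))
    · by_cases hx : x = rtp k
      · exfalso
        rw [hx, par_rtp, par_rtp] at h
        exact hne (hx.trans h)
      · by_cases hpx : par k x = rtp k
        · have hthis : par k x = y := by
            rw [hpx, par_rtp] at h
            exact hpx.trans h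
          exact Or.inl (by rw [par_cpy_nr c hx, hthis])
        · exact Or.inr (Or.inr (Or.inr (Or.inl
            (by rw [par_cpy_nr c hx, par_cpy_nr c hpx, h]))))
    · by_cases hy : y = rtp k
      · exfalso
        rw [hy, par_rtp, par_rtp] at h
        exact hne (h.symm.trans hy.symm)
      · by_cases hpy : par k y = rtp k
        · have hthis : par k y = x := by
            rw [hpy, par_rtp] at h
            exact hpy.trans h
          exact Or.inr (Or.inl (by rw [par_cpy_nr c hy, hthis]))
        · exact Or.inr (Or.inr (Or.inr (Or.inr
            (by rw [par_cpy_nr c hy, par_cpy_nr c hpy, h]))))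

theorem adj2_cross {c c' : Fin 3} (hcc : c ≠ c') {x y : Fin (A k)}
    (h : (graphPow (G (k+1)) 2).Adj (cpy c x) (cpy c' y)) : x = rtp k ∧ y = rtp k := by
  rw [show (graphPow (G (k+1)) 2) = graphPow (pg (par (k+1))) 2 from rfl, pg_pow2_adj] at h
  obtain ⟨hne, h⟩ := h
  rcases h with h | h | h | h | h
  · by_cases hx : x = rtp k
    · rw [hx, par_cpy_root] at h; exact absurd h.symm (cpy_ne_vtx c' y)
    · rw [par_cpy_nr c hx] at h; exact absurd (cpy_inj h).1 hcc
  · by_cases hy : y = rtp k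
    · rw [hy, par_cpy_root] at h; exact absurd h.symm (cpy_ne_vtx c x)
    · rw [par_cpy_nr c' hy] at h; exact absurd (cpy_inj h).1 hcc.symm
  · by_cases hx : x = rtp k
    · by_cases hy : y = rtp k
      · exact ⟨hx, hy⟩
      · rw [hx, par_cpy_root, par_cpy_nr c' hy] at h
        exact absurd h.symm (cpy_ne_vtx c' _)
    · by_cases hy : y = rtp k
      · rw [hy, par_cpy_root, par_cpy_nr c hx] at h
        exact absurd h (cpy_ne_vtx c _)
      · rw [par_cpy_nr c hx, par_cpy_nr c' hy] at h
        exact absurd (cpy_inj h).1 hcc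
  · by_cases hx : x = rtp k
    · rw [hx, par_cpy_root, par_vtx] at h
      exact absurd h.symm (cpy_ne_rnw c' y)
    · rw [par_cpy_nr c hx] at h
      by_cases hpx : par k x = rtp k
      · rw [hpx, par_cpy_root] at h
        exact absurd h.symm (cpy_ne_vtx c' y)
      · rw [par_cpy_nr c hpx] at h
        exact absurd (cpy_inj h).1 hcc
  · by_cases hy : y = rtp k
    · rw [hy, par_cpy_root, par_vtx] at h
      exact absurd h.symm (cpy_ne_rnw c x)
    · rw [par_cpy_nr c' hy] at h
      by_cases hpy : par k y = rtp k
      · rw [hpy, par_cpy_root] at h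
        exact absurd h.symm (cpy_ne_vtx c x)
      · rw [par_cpy_nr c' hpy] at h
        exact absurd (cpy_inj h).1 hcc.symm

theorem adj2_root_root {c c' : Fin 3} (hcc : c ≠ c') :
    (graphPow (G (k+1)) 2).Adj (cpy c (rtp k)) (cpy c' (rtp k)) := by
  rw [show (graphPow (G (k+1)) 2) = graphPow (pg (par (k+1))) 2 from rfl, pg_pow2_adj]
  refine ⟨fun hc => hcc (cpy_inj hc).1, ?_⟩
  right; right; left
  rw [par_cpy_root, par_cpy_root]

theorem adj2_rnw_root {c : Fin 3} :
    (graphPow (G (k+1)) 2).Adj (rnw k) (cpy c (rtp k)) := by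
  rw [show (graphPow (G (k+1)) 2) = graphPow (pg (par (k+1))) 2 from rfl, pg_pow2_adj]
  refine ⟨(cpy_ne_rnw c _).symm, ?_⟩
  right; right; right; right
  rw [par_cpy_root, par_vtx]

theorem adj2_rnw_cpy {c : Fin 3} {x : Fin (A k)}
    (h : (graphPow (G (k+1)) 2).Adj (rnw k) (cpy c x)) : x = rtp k := by
  rw [show (graphPow (G (k+1)) 2) = graphPow (pg (par (k+1))) 2 from rfl, pg_pow2_adj] at h
  obtain ⟨hne, h⟩ := h
  rcases h with h | h | h | h | h
  · rw [par_rnw] at h; exact absurd h.symm (cpy_ne_rnw c x)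
  · by_cases hx : x = rtp k
    · exact hx
    · rw [par_cpy_nr c hx] at h; exact absurd h (cpy_ne_rnw c _)
  · rw [par_rnw] at h
    by_cases hx : x = rtp k
    · rw [hx, par_cpy_root] at h; exact absurd h.symm vtx_ne_rnw
    · rw [par_cpy_nr c hx] at h; exact absurd h.symm (cpy_ne_rnw c _)
  · rw [par_rnw, par_rnw] at h; exact absurd h.symm (cpy_ne_rnw c x)
  · by_cases hx : x = rtp k
    · exact hx
    · rw [par_cpy_nr c hx] at h
      by_cases hpx : par k x = rtp k
      · rw [hpx, par_cpy_root] at h; exact absurd h vtx_ne_rnw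
      · rw [par_cpy_nr c hpx] at h; exact absurd h (cpy_ne_rnw c _)

theorem cross_edge_sq {z w : Fin (A (k+1))} (h : (graphPow (G (k+1)) 2).Adj z w) :
    (∃ c x y, z = cpy c x ∧ w = cpy c y) ∨ z = vtx k ∨ w = vtx k ∨
      ((z = rnw k ∨ ∃ c, z = cpy c (rtp k)) ∧ (w = rnw k ∨ ∃ c, w = cpy c (rtp k))) := by
  rcases big_cases z with ⟨c, x, rfl⟩ | rfl | rfl
  · rcases big_cases w with ⟨c', y, rfl⟩ | rfl | rfl
    · by_cases hcc : c = c'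
      · subst hcc; exact Or.inl ⟨c, x, y, rfl, rfl⟩
      · obtain ⟨hx, hy⟩ := adj2_cross hcc h
        exact Or.inr (Or.inr (Or.inr ⟨Or.inr ⟨c, by rw [hx]⟩, Or.inr ⟨c', by rw [hy]⟩⟩))
    · exact Or.inr (Or.inr (Or.inl rfl))
    · have hx := adj2_rnw_cpy h.symm
      exact Or.inr (Or.inr (Or.inr ⟨Or.inr ⟨c, by rw [hx]⟩, Or.inl rfl⟩))
  · exact Or.inr (Or.inl rfl)
  · rcases big_cases w with ⟨c', y, rfl⟩ | rfl | rfl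
    · have hy := adj2_rnw_cpy h
      exact Or.inr (Or.inr (Or.inr ⟨Or.inl rfl, Or.inr ⟨c', by rw [hy]⟩⟩))
    · exact Or.inr (Or.inr (Or.inl rfl))
    · exact absurd rfl h.1

end Adjacency
/-! ## Cut and layout machinery -/

theorem walk_cross {H : SimpleGraph V} {σ : V ≃ Fin (Fintype.card V)} {i : ℕ} :
    ∀ {u v : V} (w : H.Walk u v), (σ u).val < i → i ≤ (σ v).val →
      ∃ a b, a ∈ w.support ∧ b ∈ w.support ∧ (cutGraph H σ i).Adj a b := by
  intro u v w
  induction w with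
  | nil => intro h1 h2; omega
  | cons h w ih =>
    rename_i a b c
    intro h1 h2
    by_cases hm : i ≤ (σ b).val
    · exact ⟨a, b, by simp, by simp [SimpleGraph.Walk.support_cons],
        ⟨h, Or.inl ⟨h1, hm⟩⟩⟩
    · obtain ⟨a', b', ha', hb', hadj⟩ := ih (by omega) h2
      exact ⟨a', b', by simp [SimpleGraph.Walk.support_cons, ha'],
        by simp [SimpleGraph.Walk.support_cons, hb'], hadj⟩

theorem cpy_walk {k : ℕ} (c : Fin 3) (x y : Fin (A k)) :
    ∃ w : (G (k+1)).Walk (cpy c x) (cpy c y), ∀ z ∈ w.support, ∃ x', z = cpy c x' := by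
  obtain ⟨w0⟩ := (G_isTree k).isConnected.preconnected x y
  let f : G k →g G (k+1) := ⟨cpy c, fun h => adj_cpy_iff.mpr h⟩
  refine ⟨w0.map f, ?_⟩
  intro z hz
  rw [SimpleGraph.Walk.support_map, List.mem_map] at hz
  obtain ⟨x', _, rfl⟩ := hz
  exact ⟨x', rfl⟩

theorem exists_rank {m : ℕ} (key : Fin m → ℕ) (hinj : Function.Injective key) :
    ∃ τ : Equiv.Perm (Fin m), ∀ x y, τ x < τ y ↔ key x < key y := by
  classical
  set s := Tuple.sort key with hs
  have hmono : StrictMono (key ∘ s) :=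
    (Tuple.monotone_sort key).strictMono_of_injective (hinj.comp s.injective)
  refine ⟨s⁻¹, fun x y => ?_⟩
  have h1 : key x = (key ∘ s) (s⁻¹ x) := by simp
  have h2 : key y = (key ∘ s) (s⁻¹ y) := by simp
  rw [h1, h2]
  exact hmono.lt_iff_lt.symm

def ids (N : ℕ) : Fin N ≃ Fin (Fintype.card (Fin N)) := finCongr (Fintype.card_fin N).symm

@[simp] theorem ids_val {N : ℕ} (x : Fin N) : (ids N x).val = x.val := rfl

def Obstr (N : ℕ) (H : SimpleGraph (Fin N)) (r : Fin N) (k : ℕ) : Prop :=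
  ∀ σ : Fin N ≃ Fin (Fintype.card (Fin N)), ∃ i ∈ Finset.Ico 1 N,
    ∃ M : Finset (Sym2 (Fin N)), IsInducedMatching (cutGraph H σ i) M ∧ M.card = k ∧
      ∀ e ∈ M, ∀ x ∈ e, x ≠ r

theorem lift_obstr {m N : ℕ} {Hs : SimpleGraph (Fin m)} {Hb : SimpleGraph (Fin N)}
    {f : Fin m → Fin N} (hinj : Function.Injective f)
    (hadj : ∀ x y, Hs.Adj x y ↔ Hb.Adj (f x) (f y))
    {r : Fin m} {k : ℕ}
    (hobs : Obstr m Hs r k)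
    (σ : Fin N ≃ Fin (Fintype.card (Fin N))) :
    ∃ i ∈ Finset.Ico 1 N,
      (∃ x : Fin m, (σ (f x)).val < i) ∧ (∃ x : Fin m, i ≤ (σ (f x)).val) ∧
      ∃ M, IsInducedMatching (cutGraph Hb σ i) M ∧ M.card = k ∧
        ∀ e ∈ M, ∀ z ∈ e, ∃ x, z = f x ∧ x ≠ r := by
  classical
  set key : Fin m → ℕ := fun x => (σ (f x)).val with hkey
  have hkeyinj : Function.Injective key := by
    intro a b hab
    exact hinj (σ.injective (Fin.ext hab))
  obtain ⟨τ, hτ⟩ := exists_rank key hkeyinj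
  set τ' : Fin m ≃ Fin (Fintype.card (Fin m)) :=
    τ.trans (finCongr (Fintype.card_fin m).symm) with hτ'
  have hτ'val : ∀ x, (τ' x).val = (τ x).val := fun x => rfl
  obtain ⟨i₀, hi₀, M, hM, hcard, havoid⟩ := hobs τ'
  rw [Finset.mem_Ico] at hi₀
  set x₀ : Fin m := τ.symm ⟨i₀ - 1, by omega⟩ with hx₀
  set i : ℕ := key x₀ + 1 with hi
  have hτx₀ : (τ x₀).val = i₀ - 1 := by rw [hx₀]; simp
  have hcutL : ∀ x : Fin m, ((τ' x).val < i₀ ↔ (σ (f x)).val < i) := by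
    intro x
    show (τ' x).val < i₀ ↔ key x < i
    rw [hτ'val]
    constructor
    · intro h
      have h2 : ¬ (τ x₀ < τ x) := by
        rw [Fin.lt_def, hτx₀]
        omega
      rw [hτ] at h2
      omega
    · intro h
      have h2 : ¬ (key x₀ < key x) := by omega
      rw [← hτ] at h2
      rw [Fin.lt_def, hτx₀] at h2
      omega
  have hcutR : ∀ x : Fin m, (i₀ ≤ (τ' x).val ↔ i ≤ (σ (f x)).val) := by
    intro x
    have h := hcutL x
    show i₀ ≤ (τ' x).val ↔ i ≤ key x
    revert h
    show ((τ' x).val < i₀ ↔ key x < i) → _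
    intro h
    rcases h with ⟨h1, h2⟩
    constructor
    · intro hh
      by_contra hc
      exact absurd (h2 (by omega)) (by omega)
    · intro hh
      by_contra hc
      exact absurd (h1 (by omega)) (by omega)
  have hylt : ∀ x : Fin m, key x < N := by
    intro x
    have := (σ (f x)).isLt
    simpa [Fintype.card_fin] using this
  set y₀ : Fin m := τ.symm ⟨i₀, by omega⟩ with hy₀
  have hτy₀ : (τ y₀).val = i₀ := by rw [hy₀]; simp
  have hy₀r : i ≤ key y₀ := by
    have h := hcutR y₀
    show i ≤ key y₀
    have h2 : i₀ ≤ (τ' y₀).val := by rw [hτ'val, hτy₀]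
    exact h.mp h2
  have hiN : i ∈ Finset.Ico 1 N := by
    rw [Finset.mem_Ico]
    have h1 := hylt y₀
    have : 1 ≤ i := by omega
    exact ⟨this, by omega⟩
  have hadjcut : ∀ x y, (cutGraph Hs τ' i₀).Adj x y ↔ (cutGraph Hb σ i).Adj (f x) (f y) := by
    intro x y
    show (Hs.Adj x y ∧ _) ↔ (Hb.Adj (f x) (f y) ∧ _)
    rw [hadj]
    constructor
    · rintro ⟨ha, h | h⟩
      · exact ⟨ha, Or.inl ⟨(hcutL x).mp h.1, (hcutR y).mp h.2⟩⟩
      · exact ⟨ha, Or.inr ⟨(hcutL y).mp h.1, (hcutR x).mp h.2⟩⟩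
    · rintro ⟨ha, h | h⟩
      · exact ⟨ha, Or.inl ⟨(hcutL x).mpr h.1, (hcutR y).mpr h.2⟩⟩
      · exact ⟨ha, Or.inr ⟨(hcutL y).mpr h.1, (hcutR x).mpr h.2⟩⟩
  obtain ⟨MM, hMM, hMMcard, hMMmem⟩ := transfer_matching hinj hadjcut hM
  refine ⟨i, hiN, ⟨x₀, by show key x₀ < i; omega⟩, ⟨y₀, hy₀r⟩, MM, hMM,
    by rw [hMMcard, hcard], ?_⟩
  intro e he z hz
  obtain ⟨e', he', rfl⟩ := hMMmem e he
  obtain ⟨x, hx, rfl⟩ := Sym2.mem_map.mp hz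
  exact ⟨x, rfl, havoid e' he' x hx⟩
/-! ## The lower bound induction step -/

theorem fin3_other : ∀ (j : Fin 3), ∃ j₁ j₂ : Fin 3, j₁ ≠ j ∧ j₂ ≠ j ∧ j₁ ≠ j₂ ∧
    ∀ j', j' ≠ j → j' = j₁ ∨ j' = j₂ := by decide

theorem step_lower {N k : ℕ} {H : SimpleGraph (Fin N)}
    (B : Fin 3 → Set (Fin N)) (r : Fin 3 → Fin N) (rt : Fin N)
    (hrtB : ∀ j, rt ∉ B j)
    (hdisj : ∀ (j j' : Fin 3), j ≠ j' → ∀ x, x ∈ B j → x ∈ B j' → False)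
    (hcross : ∀ (j j' : Fin 3), j ≠ j' → ∀ x ∈ B j, ∀ y ∈ B j', H.Adj x y → x = r j ∧ y = r j')
    (hconn : ∀ (σ : Fin N ≃ Fin (Fintype.card (Fin N))) (i : ℕ) (j : Fin 3),
      (∃ x ∈ B j, (σ x).val < i) → (∃ x ∈ B j, i ≤ (σ x).val) →
      ∃ a b, a ∈ B j ∧ b ∈ B j ∧ (cutGraph H σ i).Adj a b)
    (hatt : ∀ (σ : Fin N ≃ Fin (Fintype.card (Fin N))) (i : ℕ) (j j' j'' : Fin 3),
      j' ≠ j → j'' ≠ j → j' ≠ j'' →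
      (∀ y ∈ B j', (σ y).val < i) → (∀ y ∈ B j'', i ≤ (σ y).val) →
      ∃ a b, (cutGraph H σ i).Adj a b ∧ a ≠ rt ∧ b ≠ rt ∧
        ∀ m', m' ∈ B j → m' ≠ r j → a ≠ m' ∧ b ≠ m' ∧ ¬ H.Adj a m' ∧ ¬ H.Adj b m')
    (hobs : ∀ (σ : Fin N ≃ Fin (Fintype.card (Fin N))) (j : Fin 3),
      ∃ i : ℕ, (1 ≤ i ∧ i < N) ∧
        (∃ x ∈ B j, (σ x).val < i) ∧ (∃ x ∈ B j, i ≤ (σ x).val) ∧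
        ∃ M, IsInducedMatching (cutGraph H σ i) M ∧ M.card = k ∧
          ∀ e ∈ M, ∀ z ∈ e, z ∈ B j ∧ z ≠ r j) :
    Obstr N H rt (k+1) := by
  classical
  intro σ
  choose i hIco hLw hRw M hM hcard hmem using hobs σ
  set E : Fin 3 → Prop := fun j => ∃ a b, (cutGraph H σ (i j)).Adj a b ∧ a ≠ rt ∧ b ≠ rt ∧
    ∀ m', m' ∈ B j → m' ≠ r j → a ≠ m' ∧ b ≠ m' ∧ ¬ H.Adj a m' ∧ ¬ H.Adj b m' with hE
  have claim1 : ∀ j, E j → ∃ i' ∈ Finset.Ico 1 N,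
      ∃ M' : Finset (Sym2 (Fin N)), IsInducedMatching (cutGraph H σ i') M' ∧
        M'.card = k + 1 ∧ ∀ e ∈ M', ∀ x ∈ e, x ≠ rt := by
    intro j hEj
    obtain ⟨a, b, hab, hart, hbrt, hgood⟩ := hEj
    have hmemj := hmem j
    have hMj := hM j
    have hnew : s(a, b) ∉ M j := by
      intro hmemab
      have h2 := (hmemj _ hmemab a (by simp)).1
      have h3 := (hmemj _ hmemab a (by simp)).2
      exact (hgood a h2 h3).1 rfl
    refine ⟨i j, Finset.mem_Ico.mpr (hIco j), insert s(a, b) (M j), ⟨?_, ?_⟩, ?_, ?_⟩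
    · intro e he
      rcases Finset.mem_insert.mp he with rfl | he
      · exact (SimpleGraph.mem_edgeSet _).mpr hab
      · exact hMj.1 he
    · intro e he f hf hnef u hu v hv
      rcases Finset.mem_insert.mp he with rfl | he <;>
        rcases Finset.mem_insert.mp hf with rfl | hf
      · exact absurd rfl hnef
      · obtain ⟨hvB, hvr⟩ := hmemj f hf v hv
        rcases Sym2.mem_iff.mp hu with rfl | rfl
        · exact ⟨(hgood v hvB hvr).1, fun hc => (hgood v hvB hvr).2.2.1 hc.1⟩
        · exact ⟨(hgood v hvB hvr).2.1, fun hc => (hgood v hvB hvr).2.2.2 hc.1⟩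
      · obtain ⟨huB, hur⟩ := hmemj e he u hu
        rcases Sym2.mem_iff.mp hv with rfl | rfl
        · exact ⟨fun hc => (hgood u huB hur).1 hc.symm,
            fun hc => (hgood u huB hur).2.2.1 hc.symm.1⟩
        · exact ⟨fun hc => (hgood u huB hur).2.1 hc.symm,
            fun hc => (hgood u huB hur).2.2.2 hc.symm.1⟩
      · exact hMj.2 e he f hf hnef u hu v hv
    · rw [Finset.card_insert_of_notMem hnew, hcard j]
    · intro e he x hx
      rcases Finset.mem_insert.mp he with rfl | he
      · rcases Sym2.mem_iff.mp hx with rfl | rfl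
        · exact hart
        · exact hbrt
      · intro hc
        exact hrtB j (hc ▸ (hmemj e he x hx).1)
  by_cases hEex : ∃ j, E j
  · obtain ⟨j, hEj⟩ := hEex
    exact claim1 j hEj
  · exfalso
    push_neg at hEex
    have hside : ∀ (j j' : Fin 3), j' ≠ j →
        (∀ x ∈ B j', (σ x).val < i j) ∨ (∀ x ∈ B j', i j ≤ (σ x).val) := by
      intro j j' hne
      by_contra hc
      push_neg at hc
      obtain ⟨⟨xr, hxr, hxr2⟩, ⟨xl, hxl, hxl2⟩⟩ := hc
      obtain ⟨a, b, haB, hbB, hab⟩ := hconn σ (i j) j' ⟨xl, hxl, by omega⟩ ⟨xr, hxr, by omega⟩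
      apply hEex j
      refine ⟨a, b, hab, fun hc2 => hrtB j' (hc2 ▸ haB), fun hc2 => hrtB j' (hc2 ▸ hbB), ?_⟩
      intro m' hm' hm'r
      refine ⟨fun hc2 => hdisj j' j hne a haB (by rw [hc2]; exact hm'),
        fun hc2 => hdisj j' j hne b hbB (by rw [hc2]; exact hm'), ?_, ?_⟩
      · intro hadj
        exact hm'r (hcross j' j hne a haB m' hm' hadj).2
      · intro hadj
        exact hm'r (hcross j' j hne b hbB m' hm' hadj).2
    have hnoatt : ∀ (j j' j'' : Fin 3), j' ≠ j → j'' ≠ j → j' ≠ j'' →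
        ¬ ((∀ y ∈ B j', (σ y).val < i j) ∧ (∀ y ∈ B j'', i j ≤ (σ y).val)) := by
      rintro j j' j'' h1 h2 h3 ⟨hLs, hRs⟩
      obtain ⟨a, b, hab, hart, hbrt, hgood⟩ := hatt σ (i j) j j' j'' h1 h2 h3 hLs hRs
      exact hEex j ⟨a, b, hab, hart, hbrt, hgood⟩
    have hSLR : ∀ j : Fin 3, (∀ j' ≠ j, ∀ x ∈ B j', (σ x).val < i j) ∨
        (∀ j' ≠ j, ∀ x ∈ B j', i j ≤ (σ x).val) := by
      intro j
      obtain ⟨j₁, j₂, h1, h2, h12, hall⟩ := fin3_other j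
      rcases hside j j₁ h1 with hL1 | hR1
      · rcases hside j j₂ h2 with hL2 | hR2
        · left
          intro j' hj' x hx
          rcases hall j' hj' with rfl | rfl
          exacts [hL1 x hx, hL2 x hx]
        · exact absurd ⟨hL1, hR2⟩ (hnoatt j j₁ j₂ h1 h2 h12)
      · rcases hside j j₂ h2 with hL2 | hR2
        · exact absurd ⟨hL2, hR1⟩ (hnoatt j j₂ j₁ h2 h1 (Ne.symm h12))
        · right
          intro j' hj' x hx
          rcases hall j' hj' with rfl | rfl
          exacts [hR1 x hx, hR2 x hx]
    have clashL : ∀ j j' : Fin 3, j ≠ j' →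
        (∀ j₀ ≠ j, ∀ x ∈ B j₀, (σ x).val < i j) →
        (∀ j₀ ≠ j', ∀ x ∈ B j₀, (σ x).val < i j') → False := by
      intro j j' hne hSj hSj'
      obtain ⟨x, hxB, hx⟩ := hRw j
      obtain ⟨x', hx'B, hx'⟩ := hRw j'
      have h1 := hSj' j hne x hxB
      have h2 := hSj j' (Ne.symm hne) x' hx'B
      omega
    have clashR : ∀ j j' : Fin 3, j ≠ j' →
        (∀ j₀ ≠ j, ∀ x ∈ B j₀, i j ≤ (σ x).val) →
        (∀ j₀ ≠ j', ∀ x ∈ B j₀, i j' ≤ (σ x).val) → False := by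
      intro j j' hne hSj hSj'
      obtain ⟨x, hxB, hx⟩ := hLw j
      obtain ⟨x', hx'B, hx'⟩ := hLw j'
      have h1 := hSj' j hne x hxB
      have h2 := hSj j' (Ne.symm hne) x' hx'B
      omega
    rcases hSLR 0 with h0 | h0 <;> rcases hSLR 1 with h1 | h1 <;> rcases hSLR 2 with h2 | h2
    · exact clashL 0 1 (by decide) h0 h1
    · exact clashL 0 1 (by decide) h0 h1
    · exact clashL 0 2 (by decide) h0 h2
    · exact clashR 1 2 (by decide) h1 h2
    · exact clashL 1 2 (by decide) h1 h2
    · exact clashR 0 2 (by decide) h0 h2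
    · exact clashR 0 1 (by decide) h0 h1
    · exact clashR 0 1 (by decide) h0 h1
/-! ## The obstruction induction -/

theorem cpy_injective {k : ℕ} (j : Fin 3) : Function.Injective (cpy (k := k) j) :=
  fun _ _ h => (cpy_inj h).2

theorem rtp_succ {k : ℕ} : rtp (k+1) = rnw k := by
  apply Fin.ext
  have hs := A_succ k
  simp only [rtp_val, rnw_val]
  omega

def Bset (k : ℕ) (j : Fin 3) : Set (Fin (A (k+1))) := {z | ∃ x, z = cpy j x}

theorem hconn_gen {k : ℕ} {H : SimpleGraph (Fin (A (k+1)))}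
    (hle : ∀ x y, (G (k+1)).Adj x y → H.Adj x y)
    (σ : Fin (A (k+1)) ≃ Fin (Fintype.card (Fin (A (k+1))))) (i : ℕ) (j : Fin 3)
    (hL : ∃ z ∈ Bset k j, (σ z).val < i) (hR : ∃ z ∈ Bset k j, i ≤ (σ z).val) :
    ∃ a b, a ∈ Bset k j ∧ b ∈ Bset k j ∧ (cutGraph H σ i).Adj a b := by
  obtain ⟨zl, ⟨xl, rfl⟩, hzl⟩ := hL
  obtain ⟨zr, ⟨xr, rfl⟩, hzr⟩ := hR
  obtain ⟨w, hw⟩ := cpy_walk j xl xr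
  let hom : G (k+1) →g H := ⟨id, fun h => hle _ _ h⟩
  obtain ⟨a, b, ha, hb, hadj⟩ := walk_cross (w.map hom) hzl hzr
  rw [SimpleGraph.Walk.support_map] at ha hb
  obtain ⟨a', ha', rfl⟩ := List.mem_map.mp ha
  obtain ⟨b', hb', rfl⟩ := List.mem_map.mp hb
  exact ⟨a', b', hw a' ha', hw b' hb', hadj⟩

theorem cpy_ne_root {k : ℕ} {j : Fin 3} {x : Fin (A k)} (hx : x ≠ rtp k) :
    cpy j x ≠ cpy j (rtp k) := fun hc => hx (cpy_inj hc).2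

theorem obstr_all : ∀ k, Obstr (A k) (G k) (rtp k) (k+1) ∧
    Obstr (A k) (graphPow (G k) 2) (rtp k) (k+1) := by
  intro k
  induction k with
  | zero =>
    have hx01 : (G 0).Adj ⟨0, by norm_num [A]⟩ ⟨1, by norm_num [A]⟩ := by
      refine ⟨by intro h; exact absurd (congrArg Fin.val h) (by norm_num), Or.inl ?_⟩
      apply Fin.ext
      simp only [par]
      norm_num
    have key : ∀ (H : SimpleGraph (Fin (A 0))),
        H.Adj ⟨0, by norm_num [A]⟩ ⟨1, by norm_num [A]⟩ → Obstr (A 0) H (rtp 0) 1 := by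
      intro H hadj σ
      set a : Fin (A 0) := ⟨0, by norm_num [A]⟩ with ha
      set b : Fin (A 0) := ⟨1, by norm_num [A]⟩ with hb
      have hne : (σ a).val ≠ (σ b).val := by
        intro hc
        have := σ.injective (Fin.ext hc)
        rw [ha, hb] at this
        exact absurd (congrArg Fin.val this) (by norm_num)
      have hlt3a : (σ a).val < 3 := by
        exact lt_of_lt_of_eq (σ a).isLt (by rw [Fintype.card_eq_nat_card, Nat.card_eq_fintype_card, Fintype.card_fin]; rfl)
      have hlt3b : (σ b).val < 3 := by
        exact lt_of_lt_of_eq (σ b).isLt (by rw [Fintype.card_eq_nat_card, Nat.card_eq_fintype_card, Fintype.card_fin]; rfl)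
      set i : ℕ := min (σ a).val (σ b).val + 1 with hi
      refine ⟨i, by rw [Finset.mem_Ico]; constructor <;> [omega; (show _ < A 0; norm_num [A]; omega)],
        {s(a, b)}, ⟨?_, ?_⟩, by simp, ?_⟩
      · intro e he
        rw [Finset.coe_singleton, Set.mem_singleton_iff] at he
        subst he
        refine (SimpleGraph.mem_edgeSet _).mpr ⟨hadj, ?_⟩
        rcases Nat.lt_or_ge (σ a).val (σ b).val with h | h
        · exact Or.inl ⟨by omega, by omega⟩
        · exact Or.inr ⟨by omega, by omega⟩
      · intro e he f hf hnef
        rw [Finset.mem_singleton] at he hf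
        exact absurd (he.trans hf.symm) hnef
      · intro e he x hx
        rw [Finset.mem_singleton] at he
        subst he
        rcases Sym2.mem_iff.mp hx with rfl | rfl
        · intro hc
          exact absurd (congrArg Fin.val hc) (by norm_num [A])
        · intro hc
          exact absurd (congrArg Fin.val hc) (by norm_num [A])
    exact ⟨key _ hx01, key _ (adj_pow2 hx01)⟩
  | succ k ih =>
    have hrtB : ∀ j, rnw k ∉ Bset k j := by
      rintro j ⟨x, hx⟩
      exact cpy_ne_rnw j x hx.symm
    have hdisj : ∀ (j j' : Fin 3), j ≠ j' → ∀ z, z ∈ Bset k j → z ∈ Bset k j' → False := by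
      rintro j j' hne z ⟨x, rfl⟩ ⟨x', hx'⟩
      exact hne (cpy_inj hx').1
    constructor
    · -- plain graph
      rw [show rtp (k+1) = rnw k from rtp_succ]
      apply step_lower (B := Bset k) (r := fun j => cpy j (rtp k)) (rt := rnw k) hrtB hdisj
      · rintro j j' hne x ⟨x', rfl⟩ y ⟨y', rfl⟩ hadj
        exact absurd hadj (adj_cross (fun hc => hne hc))
      · intro σ i j hL hR
        exact hconn_gen (fun _ _ h => h) σ i j hL hR
      · -- attacker for the plain graph
        intro σ i j j' j'' h1 h2 h3 hLs hRs
        by_cases hv : (σ (vtx k)).val < i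
        · refine ⟨vtx k, cpy j'' (rtp k), ⟨adj_vtx_cpy.mpr rfl, Or.inl ⟨hv, hRs _ ⟨rtp k, rfl⟩⟩⟩,
            vtx_ne_rnw, cpy_ne_rnw _ _, ?_⟩
          rintro m' ⟨x, rfl⟩ hm'r
          refine ⟨(cpy_ne_vtx j x).symm, fun hc => h2 (cpy_inj hc.symm).1.symm, ?_, ?_⟩
          · intro hadj
            exact hm'r (by rw [adj_vtx_cpy.mp hadj])
          · intro hadj
            exact absurd hadj.symm (adj_cross (fun hc => h2 hc.symm))
        · refine ⟨vtx k, cpy j' (rtp k), ⟨adj_vtx_cpy.mpr rfl, Or.inr ⟨hLs _ ⟨rtp k, rfl⟩, by omega⟩⟩,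
            vtx_ne_rnw, cpy_ne_rnw _ _, ?_⟩
          rintro m' ⟨x, rfl⟩ hm'r
          refine ⟨(cpy_ne_vtx j x).symm, fun hc => h1 (cpy_inj hc.symm).1.symm, ?_, ?_⟩
          · intro hadj
            exact hm'r (by rw [adj_vtx_cpy.mp hadj])
          · intro hadj
            exact absurd hadj.symm (adj_cross (fun hc => h1 hc.symm))
      · -- lifted obstruction
        intro σ j
        obtain ⟨i, hIco, hL, hR, M, hM, hcard, hmem⟩ :=
          lift_obstr (cpy_injective j) (fun x y => adj_cpy_iff.symm) ih.1 σ
        rw [Finset.mem_Ico] at hIco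
        refine ⟨i, hIco, ?_, ?_, M, hM, hcard, ?_⟩
        · obtain ⟨x, hx⟩ := hL
          exact ⟨cpy j x, ⟨x, rfl⟩, hx⟩
        · obtain ⟨x, hx⟩ := hR
          exact ⟨cpy j x, ⟨x, rfl⟩, hx⟩
        · intro e he z hz
          obtain ⟨x, rfl, hxne⟩ := hmem e he z hz
          exact ⟨⟨x, rfl⟩, cpy_ne_root hxne⟩
    · -- the square
      rw [show rtp (k+1) = rnw k from rtp_succ]
      apply step_lower (B := Bset k) (r := fun j => cpy j (rtp k)) (rt := rnw k) hrtB hdisj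
      · rintro j j' hne x ⟨x', rfl⟩ y ⟨y', rfl⟩ hadj
        obtain ⟨hx, hy⟩ := adj2_cross (fun hc => hne hc) hadj
        rw [hx, hy]
        exact ⟨rfl, rfl⟩
      · intro σ i j hL hR
        exact hconn_gen (fun _ _ h => adj_pow2 h) σ i j hL hR
      · -- attacker for the square: the two roots
        intro σ i j j' j'' h1 h2 h3 hLs hRs
        refine ⟨cpy j' (rtp k), cpy j'' (rtp k),
          ⟨adj2_root_root h3, Or.inl ⟨hLs _ ⟨rtp k, rfl⟩, hRs _ ⟨rtp k, rfl⟩⟩⟩,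
          cpy_ne_rnw _ _, cpy_ne_rnw _ _, ?_⟩
        rintro m' ⟨x, rfl⟩ hm'r
        refine ⟨fun hc => h1 (cpy_inj hc.symm).1.symm, fun hc => h2 (cpy_inj hc.symm).1.symm, ?_, ?_⟩
        · intro hadj
          exact hm'r (by rw [(adj2_cross (fun hc => h1 hc.symm) hadj.symm).1])
        · intro hadj
          exact hm'r (by rw [(adj2_cross (fun hc => h2 hc.symm) hadj.symm).1])
      · intro σ j
        obtain ⟨i, hIco, hL, hR, M, hM, hcard, hmem⟩ :=
          lift_obstr (cpy_injective j) (fun x y => adj2_cpy_iff.symm) ih.2 σ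
        rw [Finset.mem_Ico] at hIco
        refine ⟨i, hIco, ?_, ?_, M, hM, hcard, ?_⟩
        · obtain ⟨x, hx⟩ := hL
          exact ⟨cpy j x, ⟨x, rfl⟩, hx⟩
        · obtain ⟨x, hx⟩ := hR
          exact ⟨cpy j x, ⟨x, rfl⟩, hx⟩
        · intro e he z hz
          obtain ⟨x, rfl, hxne⟩ := hmem e he z hz
          exact ⟨⟨x, rfl⟩, cpy_ne_root hxne⟩
/-! ## Upper bound machinery -/

theorem matching_subset {H : SimpleGraph V} {M S : Finset (Sym2 V)} (hS : S ⊆ M)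
    (hM : IsInducedMatching H M) : IsInducedMatching H S :=
  ⟨fun e he => hM.1 (hS he), fun e he f hf => hM.2 e (hS he) f (hS hf)⟩

theorem card_le_one_plus {β : Type*} [DecidableEq β] (M : Finset β) (Int : β → Prop)
    [DecidablePred Int]
    (hone : ∀ e ∈ M, ∀ f ∈ M, ¬ Int e → ¬ Int f → e = f) {t : ℕ}
    (hint : (M.filter Int).card ≤ t) : M.card ≤ t + 1 := by
  have hsplit := Finset.card_filter_add_card_filter_not (p := Int) (s := M)
  have h1 : (M.filter (fun e => ¬ Int e)).card ≤ 1 := by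
    rw [Finset.card_le_one]
    intro a ha b hb
    rw [Finset.mem_filter] at ha hb
    exact hone a ha.1 b hb.1 ha.2 hb.2
  omega

def IntP (k : ℕ) : Sym2 (Fin (A (k+1))) → Prop :=
  fun e => ∃ (c : Fin 3) (x y : Fin (A k)), e = s(cpy c x, cpy c y)

theorem int_edge_bounds {k i : ℕ} {H : SimpleGraph (Fin (A (k+1)))} {c : Fin 3}
    {x y : Fin (A k)}
    (h : (cutGraph H (ids (A (k+1))) i).Adj (cpy c x) (cpy c y)) :
    A k * c.val < i ∧ i < A k * c.val + A k := by
  obtain ⟨-, hcr⟩ := h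
  have hx := x.isLt
  have hy := y.isLt
  simp only [ids_val, cpy_val] at hcr
  rcases hcr with ⟨h1, h2⟩ | ⟨h1, h2⟩ <;>
    constructor <;> omega

theorem int_c_unique {k i : ℕ} {c c' : Fin 3}
    (h1 : A k * c.val < i ∧ i < A k * c.val + A k)
    (h2 : A k * c'.val < i ∧ i < A k * c'.val + A k) : c = c' := by
  rcases lt_trichotomy c.val c'.val with h | h | h
  · exfalso
    have h3 : A k * (c.val + 1) ≤ A k * c'.val := Nat.mul_le_mul_left _ (by omega)
    rw [Nat.mul_succ] at h3
    omega
  · exact Fin.ext h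
  · exfalso
    have h3 : A k * (c'.val + 1) ≤ A k * c.val := Nat.mul_le_mul_left _ (by omega)
    rw [Nat.mul_succ] at h3
    omega

theorem pull_int {k t : ℕ} {H : SimpleGraph (Fin (A (k+1)))} {Hs : SimpleGraph (Fin (A k))}
    (hadjc : ∀ (c : Fin 3) (x y : Fin (A k)), Hs.Adj x y ↔ H.Adj (cpy c x) (cpy c y))
    (hsmall : ∀ i, 1 ≤ i → i < A k → ∀ M,
      IsInducedMatching (cutGraph Hs (ids (A k)) i) M → M.card ≤ t)
    {i : ℕ} {M : Finset (Sym2 (Fin (A (k+1))))}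
    (hM : IsInducedMatching (cutGraph H (ids (A (k+1))) i) M) :
    (M.filter (IntP k)).card ≤ t := by
  classical
  by_cases hne : (M.filter (IntP k)).Nonempty
  · obtain ⟨e₀, he₀⟩ := hne
    rw [Finset.mem_filter] at he₀
    obtain ⟨he₀M, c₀, x₀, y₀, rfl⟩ := he₀
    have hadj₀ : (cutGraph H (ids (A (k+1))) i).Adj (cpy c₀ x₀) (cpy c₀ y₀) :=
      (SimpleGraph.mem_edgeSet _).mp (hM.1 he₀M)
    obtain ⟨hb1, hb2⟩ := int_edge_bounds hadj₀
    have hrange : ∀ e ∈ M.filter (IntP k), ∀ z ∈ e, ∃ x', cpy c₀ x' = z := by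
      intro e he z hz
      rw [Finset.mem_filter] at he
      obtain ⟨heM, c, x, y, rfl⟩ := he
      have hadj : (cutGraph H (ids (A (k+1))) i).Adj (cpy c x) (cpy c y) :=
        (SimpleGraph.mem_edgeSet _).mp (hM.1 heM)
      have hcc := int_c_unique (int_edge_bounds hadj) ⟨hb1, hb2⟩
      subst hcc
      rcases Sym2.mem_iff.mp hz with rfl | rfl
      · exact ⟨x, rfl⟩
      · exact ⟨y, rfl⟩
    have hadjcut : ∀ x y : Fin (A k),
        (cutGraph Hs (ids (A k)) (i - A k * c₀.val)).Adj x y ↔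
        (cutGraph H (ids (A (k+1))) i).Adj (cpy c₀ x) (cpy c₀ y) := by
      intro x y
      show (Hs.Adj x y ∧ _) ↔ (H.Adj (cpy c₀ x) (cpy c₀ y) ∧ _)
      rw [hadjc c₀]
      have hx := x.isLt
      have hy := y.isLt
      simp only [ids_val, cpy_val]
      constructor
      · rintro ⟨ha, ⟨g1, g2⟩ | ⟨g1, g2⟩⟩
        · exact ⟨ha, Or.inl ⟨by omega, by omega⟩⟩
        · exact ⟨ha, Or.inr ⟨by omega, by omega⟩⟩
      · rintro ⟨ha, ⟨g1, g2⟩ | ⟨g1, g2⟩⟩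
        · exact ⟨ha, Or.inl ⟨by omega, by omega⟩⟩
        · exact ⟨ha, Or.inr ⟨by omega, by omega⟩⟩
    have : Nonempty (Fin (A k)) := ⟨⟨0, by have := A_ge k; omega⟩⟩
    obtain ⟨M', hM', hM'card⟩ := transfer_matching_rev (cpy_injective c₀) hadjcut
      (matching_subset (Finset.filter_subset _ _) hM) hrange
    rw [← hM'card]
    refine hsmall (i - A k * c₀.val) (by omega) (by omega) M' hM'
  · rw [Finset.not_nonempty_iff_eq_empty] at hne
    rw [hne]
    simp

theorem hone_plain {k i : ℕ} {σ : Fin (A (k+1)) ≃ Fin (Fintype.card (Fin (A (k+1))))}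
    {M : Finset (Sym2 (Fin (A (k+1))))}
    (hM : IsInducedMatching (cutGraph (G (k+1)) σ i) M) :
    ∀ e ∈ M, ∀ f ∈ M, ¬ IntP k e → ¬ IntP k f → e = f := by
  have hvtx : ∀ g ∈ M, ¬ IntP k g → vtx k ∈ g := by
    intro g hg hIg
    induction g using Sym2.ind with
    | _ z w =>
      have hadj : (cutGraph (G (k+1)) σ i).Adj z w :=
        (SimpleGraph.mem_edgeSet _).mp (hM.1 hg)
      rcases cross_edge_plain hadj.1 with ⟨c, x, y, rfl, rfl⟩ | rfl | rfl
      · exact absurd ⟨c, x, y, rfl⟩ hIg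
      · simp
      · simp
  intro e he f hf hIe hIf
  by_contra hef
  exact (hM.2 e he f hf hef (vtx k) (hvtx e he hIe) (vtx k) (hvtx f hf hIf)).1 rfl

def Kset (k : ℕ) : Fin (A (k+1)) → Prop :=
  fun z => z = rnw k ∨ ∃ c, z = cpy c (rtp k)

theorem adj2_vtx_K {k : ℕ} {z : Fin (A (k+1))} (hz : Kset k z) :
    (graphPow (G (k+1)) 2).Adj (vtx k) z := by
  rcases hz with rfl | ⟨c, rfl⟩
  · exact adj_pow2 adj_vtx_rnw
  · exact adj_pow2 (adj_vtx_cpy.mpr rfl)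

theorem adj2_KK {k : ℕ} {z w : Fin (A (k+1))} (hz : Kset k z) (hw : Kset k w) (hne : z ≠ w) :
    (graphPow (G (k+1)) 2).Adj z w := by
  rcases hz with rfl | ⟨c, rfl⟩ <;> rcases hw with rfl | ⟨c', rfl⟩
  · exact absurd rfl hne
  · exact adj2_rnw_root
  · exact adj2_rnw_root.symm
  · refine adj2_root_root (fun hc => hne ?_)
    rw [hc]

theorem orient_edge {N i : ℕ} {H : SimpleGraph (Fin N)}
    {σ : Fin N ≃ Fin (Fintype.card (Fin N))} {M : Finset (Sym2 (Fin N))}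
    (hM : IsInducedMatching (cutGraph H σ i) M) :
    ∀ g ∈ M, ∃ zl zr, g = s(zl, zr) ∧ (σ zl).val < i ∧ i ≤ (σ zr).val := by
  intro g hg
  induction g using Sym2.ind with
  | _ z w =>
    have hadj : (cutGraph H σ i).Adj z w := (SimpleGraph.mem_edgeSet _).mp (hM.1 hg)
    rcases hadj.2 with ⟨h1, h2⟩ | ⟨h1, h2⟩
    · exact ⟨z, w, rfl, h1, h2⟩
    · exact ⟨w, z, Sym2.eq_swap, h1, h2⟩

theorem hone_sq {k i : ℕ} {σ : Fin (A (k+1)) ≃ Fin (Fintype.card (Fin (A (k+1))))}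
    {M : Finset (Sym2 (Fin (A (k+1))))}
    (hM : IsInducedMatching (cutGraph (graphPow (G (k+1)) 2) σ i) M) :
    ∀ e ∈ M, ∀ f ∈ M, ¬ IntP k e → ¬ IntP k f → e = f := by
  have hclass : ∀ g ∈ M, ¬ IntP k g → vtx k ∈ g ∨ (∀ z ∈ g, Kset k z) := by
    intro g hg hIg
    induction g using Sym2.ind with
    | _ z w =>
      have hadj : (cutGraph (graphPow (G (k+1)) 2) σ i).Adj z w :=
        (SimpleGraph.mem_edgeSet _).mp (hM.1 hg)
      rcases cross_edge_sq hadj.1 with ⟨c, x, y, rfl, rfl⟩ | rfl | rfl | ⟨hz, hw⟩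
      · exact absurd ⟨c, x, y, rfl⟩ hIg
      · exact Or.inl (by simp)
      · exact Or.inl (by simp)
      · refine Or.inr ?_
        intro u hu
        rcases Sym2.mem_iff.mp hu with rfl | rfl
        · exact hz
        · exact hw
  -- the mixed-case helper : an edge containing vtx conflicts with an all-K edge
  have hmix : ∀ e ∈ M, ∀ f ∈ M, e ≠ f → vtx k ∈ e → (∀ z ∈ f, Kset k z) → False := by
    intro e he f hf hef hve hKf
    obtain ⟨fl, fr, rfl, hfl, hfr⟩ := orient_edge hM f hf
    by_cases hv : (σ (vtx k)).val < i
    · have hpair := hM.2 e he _ hf hef (vtx k) hve fr (by rw [Sym2.mem_iff]; right; rfl)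
      exact hpair.2 ⟨adj2_vtx_K (hKf fr (by rw [Sym2.mem_iff]; right; rfl)), Or.inl ⟨hv, hfr⟩⟩
    · have hpair := hM.2 e he _ hf hef (vtx k) hve fl (by rw [Sym2.mem_iff]; left; rfl)
      exact hpair.2 ⟨adj2_vtx_K (hKf fl (by rw [Sym2.mem_iff]; left; rfl)),
        Or.inr ⟨hfl, by omega⟩⟩
  intro e he f hf hIe hIf
  by_contra hef
  rcases hclass e he hIe with hve | hKe <;> rcases hclass f hf hIf with hvf | hKf
  · exact (hM.2 e he f hf hef (vtx k) hve (vtx k) hvf).1 rfl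
  · exact hmix e he f hf hef hve hKf
  · exact hmix f hf e he (Ne.symm hef) hvf hKe
  · obtain ⟨el, er, rfl, hel, her⟩ := orient_edge hM e he
    obtain ⟨fl, fr, rfl, hfl, hfr⟩ := orient_edge hM f hf
    have hpair := hM.2 _ he _ hf hef el (by rw [Sym2.mem_iff]; left; rfl)
      fr (by rw [Sym2.mem_iff]; right; rfl)
    refine hpair.2 ⟨adj2_KK (hKe el (by rw [Sym2.mem_iff]; left; rfl))
      (hKf fr (by rw [Sym2.mem_iff]; right; rfl)) hpair.1, Or.inl ⟨hel, hfr⟩⟩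

theorem small3 (H : SimpleGraph (Fin (A 0))) (M : Finset (Sym2 (Fin (A 0))))
    (hM : IsInducedMatching H M) : M.card ≤ 1 := by
  by_contra hc
  push_neg at hc
  obtain ⟨e, he, f, hf, hef⟩ := Finset.one_lt_card.mp hc
  induction e using Sym2.ind with
  | _ a b =>
    induction f using Sym2.ind with
    | _ c d =>
      have hadj1 : H.Adj a b := (SimpleGraph.mem_edgeSet _).mp (hM.1 he)
      have hadj2 : H.Adj c d := (SimpleGraph.mem_edgeSet _).mp (hM.1 hf)
      have hac := (hM.2 _ he _ hf hef a (by simp) c (by simp)).1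
      have had := (hM.2 _ he _ hf hef a (by simp) d (by simp [Sym2.mem_iff])).1
      have hbc := (hM.2 _ he _ hf hef b (by simp [Sym2.mem_iff]) c (by simp)).1
      have hbd := (hM.2 _ he _ hf hef b (by simp [Sym2.mem_iff]) d (by simp [Sym2.mem_iff])).1
      have h3 : A 0 = 3 := rfl
      have v1 := a.isLt
      have v2 := b.isLt
      have v3 := c.isLt
      have v4 := d.isLt
      have n1 : a.val ≠ b.val := fun h => hadj1.ne (Fin.ext h)
      have n2 : c.val ≠ d.val := fun h => hadj2.ne (Fin.ext h)
      have n3 : a.val ≠ c.val := fun h => hac (Fin.ext h)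
      have n4 : a.val ≠ d.val := fun h => had (Fin.ext h)
      have n5 : b.val ≠ c.val := fun h => hbc (Fin.ext h)
      have n6 : b.val ≠ d.val := fun h => hbd (Fin.ext h)
      omega

theorem upper_all : ∀ k,
    (∀ i, 1 ≤ i → i < A k → ∀ M,
      IsInducedMatching (cutGraph (G k) (ids (A k)) i) M → M.card ≤ k+1) ∧
    (∀ i, 1 ≤ i → i < A k → ∀ M,
      IsInducedMatching (cutGraph (graphPow (G k) 2) (ids (A k)) i) M → M.card ≤ k+1) := by
  intro k
  induction k with
  | zero =>
    exact ⟨fun i _ _ M hM => small3 _ M hM, fun i _ _ M hM => small3 _ M hM⟩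
  | succ k ih =>
    constructor
    · intro i h1 h2 M hM
      exact card_le_one_plus M (IntP k) (hone_plain hM)
        (pull_int (fun c x y => adj_cpy_iff.symm) ih.1 hM)
    · intro i h1 h2 M hM
      exact card_le_one_plus M (IntP k) (hone_sq hM)
        (pull_int (fun c x y => adj2_cpy_iff.symm) ih.2 hM)
/-! ## Final assembly -/

theorem lmw_G (k : ℕ) : lmw (G k) = k + 1 ∧ lmw (graphPow (G k) 2) = k + 1 := by
  have hcard : Fintype.card (Fin (A k)) = A k := Fintype.card_fin _
  have lower : ∀ (H : SimpleGraph (Fin (A k))), Obstr (A k) H (rtp k) (k+1) →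
      ∀ σ, k + 1 ≤ mw H σ := by
    intro H hobs σ
    obtain ⟨i, hi, M, hM, hMcard, -⟩ := hobs σ
    calc k + 1 = M.card := hMcard.symm
    _ ≤ mim (cutGraph H σ i) := card_le_mim hM
    _ ≤ mw H σ := le_mw (by rwa [hcard])
  have upper : ∀ (H : SimpleGraph (Fin (A k))),
      (∀ i, 1 ≤ i → i < A k → ∀ M,
        IsInducedMatching (cutGraph H (ids (A k)) i) M → M.card ≤ k+1) →
      mw H (ids (A k)) ≤ k + 1 := by
    intro H hub
    apply mw_le
    intro i hi1 hi2
    rw [hcard] at hi2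
    exact mim_le (fun M hM => hub i hi1 hi2 M hM)
  exact ⟨lmw_eq ⟨ids (A k), upper _ (upper_all k).1⟩ (lower _ (obstr_all k).1),
    lmw_eq ⟨ids (A k), upper _ (upper_all k).2⟩ (lower _ (obstr_all k).2)⟩

theorem lmw_one_vertex (H : SimpleGraph (Fin 1)) : lmw H = 0 := by
  have hcard : Fintype.card (Fin 1) = 1 := Fintype.card_fin _
  refine lmw_eq ⟨ids 1, ?_⟩ (fun σ => Nat.zero_le _)
  apply mw_le
  intro i hi1 hi2
  rw [hcard] at hi2
  omega

theorem bot_isTree : (⊥ : SimpleGraph (Fin 1)).IsTree := by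
  constructor
  · rw [SimpleGraph.connected_iff]
    refine ⟨fun u v => ?_, ⟨0⟩⟩
    rw [Subsingleton.elim u v]
  · exact SimpleGraph.isAcyclic_bot

theorem exists_tree_lmw_square_eq' (k : ℕ) :
    ∃ (n : ℕ) (T : SimpleGraph (Fin n)), T.IsTree ∧ lmw T = k ∧ lmw (graphPow T 2) = k := by
  cases k with
  | zero =>
    exact ⟨1, ⊥, bot_isTree, lmw_one_vertex _, lmw_one_vertex _⟩
  | succ k =>
    exact ⟨A k, G k, G_isTree k, (lmw_G k).1, (lmw_G k).2⟩

/-- For every `k ≥ 0` there exists a tree `T` with `lmw T = k` and `lmw (T²) = k`: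
the lower bound `lmw (T²) ≥ lmw T` is tight for every `k`. -/
theorem exists_tree_lmw_square_eq (k : ℕ) :
    ∃ (n : ℕ) (T : SimpleGraph (Fin n)), T.IsTree ∧ lmw T = k ∧ lmw (graphPow T 2) = k := by
  exact exists_tree_lmw_square_eq' k

end LMW
end
end
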